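/- arXiv:0707.3271 — 3 statements merged into one kernel-verified Lean document; each statement's English description precedes it below -/
import Mathlib

section
/- Let ξ, η ∈ c₀* with ξ ≺ η. Then the following conditions are equivalent: (i) for every m ∈ ℕ, the set {∑_{j=1}^n (η_j − ξ_j) : n ≥ m} attains a minimum (i.e., has a least element that is achieved); (ii) there exists ζ ∈ c₀* with ξ ≺_b ζ and ζ_n ≤ η_n for all n; (iii) there exists ρ ∈ c₀* with ξ_n ≤ ρ_n for all n and ρ ≺_b η. -/
/-!
Sequences are indexed by `ℕ` starting at 0, so `∑ j in Finset.range n` is the sum of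
the first `n` terms `∑_{j=1}^n` (1-based).  In block majorization the equality indices
`n_k` are realized as `φ k + 1` for a strictly monotone `φ : ℕ → ℕ`.
-/

/-- `ξ ∈ c₀*`: nonnegative, nonincreasing, converging to 0. -/
def IsC0Star (ξ : ℕ → ℝ) : Prop :=
  (∀ n, 0 ≤ ξ n) ∧ (∀ n, ξ (n + 1) ≤ ξ n) ∧ Filter.Tendsto ξ Filter.atTop (nhds 0)

/-- `ξ ≺ η`: majorization, `∑_{j=1}^n ξ_j ≤ ∑_{j=1}^n η_j` for every `n`. -/
def Maj (ξ η : ℕ → ℝ) : Prop :=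
  ∀ n : ℕ, ∑ j ∈ Finset.range n, ξ j ≤ ∑ j ∈ Finset.range n, η j

/-- `ξ ≺_b η`: block majorization, `ξ ≺ η` with equality of partial sums along a
strictly increasing sequence of indices tending to infinity. -/
def MajB (ξ η : ℕ → ℝ) : Prop :=
  Maj ξ η ∧ ∃ φ : ℕ → ℕ, StrictMono φ ∧
    ∀ k, ∑ j ∈ Finset.range (φ k + 1), ξ j = ∑ j ∈ Finset.range (φ k + 1), η j

open Finset

namespace Stmt13Aux

/-- Condition (i). -/
def CondI (ξ η : ℕ → ℝ) : Prop :=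
  ∀ m : ℕ, ∃ n : ℕ, m ≤ n ∧ ∀ n' : ℕ, m ≤ n' →
    (∑ j ∈ Finset.range n, (η j - ξ j)) ≤ ∑ j ∈ Finset.range n', (η j - ξ j)

lemma attain_of_tail (δ : ℕ → ℝ)
    (h : ∀ m, ∃ N, m ≤ N ∧ ∀ n, N ≤ n → δ N ≤ δ n) :
    ∀ m, ∃ n, m ≤ n ∧ ∀ n', m ≤ n' → δ n ≤ δ n' := by
  intro m
  obtain ⟨N, hmN, hN⟩ := h m
  obtain ⟨n₀, hmem, hmin⟩ := (Finset.Icc m N).exists_min_image δ ⟨m, by simp [hmN]⟩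
  refine ⟨n₀, (Finset.mem_Icc.1 hmem).1, fun n' hn' => ?_⟩
  by_cases h' : n' ≤ N
  · exact hmin n' (Finset.mem_Icc.2 ⟨hn', h'⟩)
  · exact le_trans (hmin N (Finset.mem_Icc.2 ⟨hmN, le_rfl⟩)) (hN n' (le_of_not_ge h'))

/-- Common lemma: if `δ = A + B` with `A` monotone, `B ≥ 0` and `B` vanishing along an
unbounded sequence, then tails of `δ` attain minima. -/
lemma condI_of_decomp (ξ η A B : ℕ → ℝ)
    (hAB : ∀ n, (∑ j ∈ Finset.range n, (η j - ξ j)) = A n + B n)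
    (hA : Monotone A) (hB : ∀ n, 0 ≤ B n)
    (hz : ∀ m, ∃ N, m ≤ N ∧ B N = 0) : CondI ξ η := by
  set δ : ℕ → ℝ := fun n => ∑ j ∈ Finset.range n, (η j - ξ j) with hδ
  apply attain_of_tail
  intro m
  obtain ⟨N, hmN, hBN⟩ := hz m
  refine ⟨N, hmN, fun n hn => ?_⟩
  have h1 := hAB N
  have h2 := hAB n
  have h3 := hA hn
  have h4 := hB n
  linarith

lemma condI_of_zeta (ξ η ζ : ℕ → ℝ) (hζη : ∀ n, ζ n ≤ η n) (hmb : MajB ξ ζ) :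
    CondI ξ η := by
  obtain ⟨hmaj, φ, hφ, heq⟩ := hmb
  refine condI_of_decomp ξ η (fun n => ∑ j ∈ range n, (η j - ζ j))
    (fun n => ∑ j ∈ range n, (ζ j - ξ j)) (fun n => ?_) ?_ (fun n => ?_) (fun m => ?_)
  · rw [← Finset.sum_add_distrib]; apply Finset.sum_congr rfl; intro j _; ring
  · apply monotone_nat_of_le_succ
    intro n
    rw [Finset.sum_range_succ]
    have := hζη n
    linarith
  · rw [Finset.sum_sub_distrib]
    have := hmaj n
    linarith
  · refine ⟨φ m + 1, le_trans (Nat.le_succ m) (Nat.succ_le_succ hφ.le_apply), ?_⟩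
    rw [Finset.sum_sub_distrib]
    have := heq m
    linarith

lemma condI_of_rho (ξ η ρ : ℕ → ℝ) (hξρ : ∀ n, ξ n ≤ ρ n) (hmb : MajB ρ η) :
    CondI ξ η := by
  obtain ⟨hmaj, φ, hφ, heq⟩ := hmb
  refine condI_of_decomp ξ η (fun n => ∑ j ∈ range n, (ρ j - ξ j))
    (fun n => ∑ j ∈ range n, (η j - ρ j)) (fun n => ?_) ?_ (fun n => ?_) (fun m => ?_)
  · rw [← Finset.sum_add_distrib]; apply Finset.sum_congr rfl; intro j _; ring
  · apply monotone_nat_of_le_succ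
    intro n
    rw [Finset.sum_range_succ]
    have := hξρ n
    linarith
  · rw [Finset.sum_sub_distrib]
    have := hmaj n
    linarith
  · refine ⟨φ m + 1, le_trans (Nat.le_succ m) (Nat.succ_le_succ hφ.le_apply), ?_⟩
    rw [Finset.sum_sub_distrib]
    have := heq m
    linarith

/-- Block index: the largest `k` with `q k ≤ j`. -/
def blk (q : ℕ → ℕ) (j : ℕ) : ℕ := Nat.findGreatest (fun k => q k ≤ j) j

lemma blk_le (q : ℕ → ℕ) (h0 : q 0 = 0) (j : ℕ) : q (blk q j) ≤ j :=
  Nat.findGreatest_spec (P := fun k => q k ≤ j) (Nat.zero_le j) (by simp [h0])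

lemma blk_lt (q : ℕ → ℕ) (hq : StrictMono q) (j : ℕ) : j < q (blk q j + 1) := by
  by_contra hc
  push_neg at hc
  have h1 : blk q j + 1 ≤ j := le_trans hq.le_apply hc
  exact Nat.findGreatest_is_greatest (P := fun k => q k ≤ j) (Nat.lt_succ_self _) h1 hc

lemma blk_eq (q : ℕ → ℕ) (hq : StrictMono q) (h0 : q 0 = 0) {k j : ℕ}
    (h1 : q k ≤ j) (h2 : j < q (k + 1)) : blk q j = k := by
  have a1 := blk_le q h0 j
  have a2 := blk_lt q hq j
  have c1 : blk q j < k + 1 := hq.lt_iff_lt.1 (lt_of_le_of_lt a1 h2)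
  have c2 : k < blk q j + 1 := hq.lt_iff_lt.1 (lt_of_le_of_lt h1 a2)
  omega

lemma blk_ge (q : ℕ → ℕ) (hq : StrictMono q) {K j : ℕ} (h : q K ≤ j) : K ≤ blk q j :=
  Nat.le_findGreatest (le_trans hq.le_apply h) h

lemma sum_range_q_eq (q : ℕ → ℕ) (h0 : q 0 = 0) (hm : ∀ k, q k ≤ q (k + 1)) (f g : ℕ → ℝ)
    (hb : ∀ k, ∑ j ∈ Ico (q k) (q (k + 1)), f j = ∑ j ∈ Ico (q k) (q (k + 1)), g j) :
    ∀ k, ∑ j ∈ range (q k), f j = ∑ j ∈ range (q k), g j := by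
  intro k
  induction k with
  | zero => rw [h0]; simp
  | succ k ih =>
      rw [← Finset.sum_range_add_sum_Ico f (hm k), ← Finset.sum_range_add_sum_Ico g (hm k),
        ih, hb k]

lemma exists_level_max (ξ : ℕ → ℝ) (hξ0 : ∀ n, 0 ≤ ξ n) (B : Finset ℕ) (hBne : B.Nonempty)
    (T : ℝ) (hT0 : 0 ≤ T) (hle : ∑ j ∈ B, ξ j ≤ T) :
    ∃ d, 0 ≤ d ∧ ∑ j ∈ B, max (ξ j) d = T := by
  have hf : ContinuousOn (fun d : ℝ => ∑ j ∈ B, max (ξ j) d) (Set.Icc 0 T) :=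
    (continuous_finset_sum B fun j _ => continuous_const.max continuous_id).continuousOn
  have h1 : ∑ j ∈ B, max (ξ j) (0 : ℝ) = ∑ j ∈ B, ξ j :=
    Finset.sum_congr rfl fun j _ => max_eq_left (hξ0 j)
  have h2 : T ≤ ∑ j ∈ B, max (ξ j) T := by
    obtain ⟨i, hi⟩ := hBne
    calc T ≤ max (ξ i) T := le_max_right _ _
    _ ≤ ∑ j ∈ B, max (ξ j) T :=
        Finset.single_le_sum (fun j _ => le_max_of_le_right hT0) hi
  have hmem : T ∈ Set.Icc ((fun d : ℝ => ∑ j ∈ B, max (ξ j) d) 0)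
      ((fun d : ℝ => ∑ j ∈ B, max (ξ j) d) T) := by
    refine ⟨?_, ?_⟩
    · dsimp only; rw [h1]; exact hle
    · exact h2
  obtain ⟨d, hdmem, hdeq⟩ := intermediate_value_Icc hT0 hf hmem
  exact ⟨d, hdmem.1, hdeq⟩

lemma exists_rho (ξ η : ℕ → ℝ) (hξ : IsC0Star ξ) (hη : IsC0Star η) (h : Maj ξ η)
    (hi : ∀ m : ℕ, ∃ n : ℕ, m ≤ n ∧ ∀ n' : ℕ, m ≤ n' →
      (∑ j ∈ Finset.range n, (η j - ξ j)) ≤ ∑ j ∈ Finset.range n', (η j - ξ j)) :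
    ∃ ρ : ℕ → ℝ, IsC0Star ρ ∧ (∀ n, ξ n ≤ ρ n) ∧ MajB ρ η := by
  obtain ⟨hξ0, hξs, hξt⟩ := hξ
  obtain ⟨hη0, hηs, hηt⟩ := hη
  have ξa : Antitone ξ := antitone_nat_of_succ_le hξs
  have ηa : Antitone η := antitone_nat_of_succ_le hηs
  set δ : ℕ → ℝ := fun n => ∑ j ∈ Finset.range n, (η j - ξ j) with hδdef
  have hδ0 : ∀ m, 0 ≤ δ m := by
    intro m
    have hm := h m
    simp only [hδdef, Finset.sum_sub_distrib]
    linarith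
  -- the block endpoints
  let q : ℕ → ℕ := fun k => Nat.rec 0 (fun _ p => Classical.choose (hi (p + 1))) k
  have hq0 : q 0 = 0 := rfl
  have hqspec : ∀ k, q k + 1 ≤ q (k + 1) ∧ ∀ n', q k + 1 ≤ n' → δ (q (k + 1)) ≤ δ n' :=
    fun k => Classical.choose_spec (hi (q k + 1))
  have hqlt : ∀ k, q k < q (k + 1) := fun k => (hqspec k).1
  have hqm : StrictMono q := strictMono_nat_of_lt_succ hqlt
  have P2 : ∀ k m, q k + 1 ≤ m → δ (q (k + 1)) ≤ δ m := fun k => (hqspec k).2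
  have P1 : ∀ k m, q k ≤ m → δ (q k) ≤ δ m := by
    intro k
    induction k with
    | zero =>
        intro m _
        have : δ (q 0) = 0 := by rw [hq0]; simp [hδdef]
        rw [this]; exact hδ0 m
    | succ k ih =>
        intro m hm
        exact P2 k m (le_trans (hqlt k) hm)
  have hIco : ∀ {a b : ℕ}, a ≤ b → ∑ j ∈ Ico a b, (η j - ξ j) = δ b - δ a := by
    intro a b hab
    have := Finset.sum_range_add_sum_Ico (fun j => η j - ξ j) hab
    simp only [hδdef]
    linarith
  have P1' : ∀ k m, q k ≤ m → ∑ j ∈ Ico (q k) m, ξ j ≤ ∑ j ∈ Ico (q k) m, η j := by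
    intro k m hm
    have h1 := P1 k m hm
    have h2 := hIco hm
    rw [Finset.sum_sub_distrib] at h2
    linarith
  have P2' : ∀ k m, q k + 1 ≤ m → m ≤ q (k + 1) →
      ∑ j ∈ Ico m (q (k + 1)), η j ≤ ∑ j ∈ Ico m (q (k + 1)), ξ j := by
    intro k m hm1 hm2
    have h1 := P2 k m hm1
    have h2 := hIco hm2
    rw [Finset.sum_sub_distrib] at h2
    linarith
  -- the levels
  have hd : ∀ k, ∃ d : ℝ, 0 ≤ d ∧
      ∑ j ∈ Ico (q k) (q (k + 1)), max (ξ j) d = ∑ j ∈ Ico (q k) (q (k + 1)), η j := by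
    intro k
    refine exists_level_max ξ hξ0 _ ⟨q k, Finset.mem_Ico.2 ⟨le_rfl, hqlt k⟩⟩ _
      (Finset.sum_nonneg fun j _ => hη0 j) ?_
    exact P1' k (q (k + 1)) (le_of_lt (hqlt k))
  choose d hd0 hdeq using hd
  set ρ : ℕ → ℝ := fun j => max (ξ j) (d (blk q j)) with hρdef
  have hρeval : ∀ k j, q k ≤ j → j < q (k + 1) → ρ j = max (ξ j) (d k) := by
    intro k j h1 h2
    simp only [hρdef, blk_eq q hqm hq0 h1 h2]
  have hρsum : ∀ k, ∑ j ∈ Ico (q k) (q (k + 1)), ρ j = ∑ j ∈ Ico (q k) (q (k + 1)), η j := by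
    intro k
    rw [← hdeq k]
    refine Finset.sum_congr rfl fun j hj => ?_
    obtain ⟨h1, h2⟩ := Finset.mem_Ico.1 hj
    exact hρeval k j h1 h2
  have cardpos : ∀ k, 0 < ((Ico (q k) (q (k + 1))).card : ℝ) := by
    intro k
    rw [Nat.card_Ico]
    have := hqlt k
    have : 0 < q (k + 1) - q k := by omega
    exact_mod_cast this
  have hdle : ∀ k, (∀ j ∈ Ico (q k) (q (k + 1)), max (ξ j) (d k) = d k) → d k ≤ η (q k) := by
    intro k hconst
    have h1 : ∑ j ∈ Ico (q k) (q (k + 1)), η j ≤ (Ico (q k) (q (k + 1))).card • η (q k) :=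
      Finset.sum_le_card_nsmul _ _ _ fun j hj => ηa (Finset.mem_Ico.1 hj).1
    have h2 : ∑ j ∈ Ico (q k) (q (k + 1)), max (ξ j) (d k) =
        (Ico (q k) (q (k + 1))).card • d k := by
      rw [Finset.sum_congr rfl hconst, Finset.sum_const]
    have h3 := hdeq k
    rw [h2] at h3
    rw [← h3] at h1
    rw [nsmul_eq_mul, nsmul_eq_mul] at h1
    exact le_of_mul_le_mul_left (by linarith [h1]) (cardpos k)
  -- key boundary fact
  have hkey : ∀ k, η (q (k + 1) - 1) ≤ ρ (q (k + 1) - 1) := by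
    intro k
    have hlt := hqlt k
    set e := q (k + 1) - 1 with he
    have he1 : q k ≤ e := by omega
    have he2 : e < q (k + 1) := by omega
    have hev : ρ e = max (ξ e) (d k) := hρeval k e he1 he2
    rcases eq_or_lt_of_le he1 with hcase | hcase
    · -- singleton block
      have hsing : q (k + 1) = q k + 1 := by omega
      have hsum := hρsum k
      rw [hsing, Nat.Ico_succ_singleton, Finset.sum_singleton, Finset.sum_singleton] at hsum
      rw [← hcase, hsum]
    · -- e ≥ q k + 1 : η e ≤ ξ e
      have h1 := P2 k e (by omega)
      have h2 : δ (q (k + 1)) = δ (e + 1) := by rw [show e + 1 = q (k + 1) by omega]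
      have h3 : δ (e + 1) - δ e = η e - ξ e := by
        simp only [hδdef, Finset.sum_range_succ]
        ring
      have h4 : η e ≤ ξ e := by rw [h2] at h1; linarith
      rw [hev]
      exact le_trans h4 (le_max_left _ _)
  -- antitone
  have hρs : ∀ j, ρ (j + 1) ≤ ρ j := by
    intro j
    set k := blk q j with hk
    have hj1 : q k ≤ j := blk_le q hq0 j
    have hj2 : j < q (k + 1) := blk_lt q hqm j
    have hev : ρ j = max (ξ j) (d k) := hρeval k j hj1 hj2
    by_cases hb : j + 1 < q (k + 1)
    · rw [hρeval k (j + 1) (by omega) hb, hev]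
      exact max_le_max (ξa (Nat.le_succ j)) le_rfl
    · have hj3 : j + 1 = q (k + 1) := by omega
      have hev2 : ρ (j + 1) = max (ξ (j + 1)) (d (k + 1)) := by
        refine hρeval (k + 1) (j + 1) (by omega) ?_
        have := hqlt (k + 1)
        omega
      have hkeyj : η j ≤ ρ j := by
        have := hkey k
        rw [show q (k + 1) - 1 = j by omega] at this
        exact this
      rw [hev2]
      apply max_le
      · exact le_trans (ξa (Nat.le_succ j)) (by rw [hev]; exact le_max_left _ _)
      · by_contra hc
        push_neg at hc
        have hall : ∀ i ∈ Ico (q (k + 1)) (q (k + 2)), max (ξ i) (d (k + 1)) = d (k + 1) := by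
          intro i hi
          apply max_eq_right
          have hi1 : q (k + 1) ≤ i := (Finset.mem_Ico.1 hi).1
          have : ξ i ≤ ξ j := ξa (by omega)
          have : ξ i ≤ ρ j := le_trans this (by rw [hev]; exact le_max_left _ _)
          linarith
        have h1 : ∑ i ∈ Ico (q (k + 1)) (q (k + 2)), η i ≤
            (Ico (q (k + 1)) (q (k + 2))).card • η (q (k + 1)) :=
          Finset.sum_le_card_nsmul _ _ _ fun i hi => ηa (Finset.mem_Ico.1 hi).1
        have h2 : ∑ i ∈ Ico (q (k + 1)) (q (k + 2)), max (ξ i) (d (k + 1)) =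
            (Ico (q (k + 1)) (q (k + 2))).card • d (k + 1) := by
          rw [Finset.sum_congr rfl hall, Finset.sum_const]
        have h3 := hdeq (k + 1)
        rw [h2] at h3
        rw [← h3, nsmul_eq_mul, nsmul_eq_mul] at h1
        have h5 : d (k + 1) ≤ η (q (k + 1)) :=
          le_of_mul_le_mul_left (by linarith [h1]) (cardpos (k + 1))
        have h6 : η (q (k + 1)) ≤ η j := ηa (by omega)
        linarith [hkeyj]
  -- partial sums agree at block ends
  have hRq : ∀ k, ∑ j ∈ range (q k), ρ j = ∑ j ∈ range (q k), η j :=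
    sum_range_q_eq q hq0 (fun k => le_of_lt (hqlt k)) ρ η hρsum
  -- majorization
  have hmaj : Maj ρ η := by
    intro m
    set k := blk q m with hk
    have hm1 : q k ≤ m := blk_le q hq0 m
    have hm2 : m < q (k + 1) := blk_lt q hqm m
    have hsplitρ := Finset.sum_range_add_sum_Ico ρ hm1
    have hsplitη := Finset.sum_range_add_sum_Ico η hm1
    have hpre : ∑ j ∈ Ico (q k) m, ρ j ≤ ∑ j ∈ Ico (q k) m, η j := by
      rcases eq_or_lt_of_le hm1 with hc | hc
      · rw [← hc]; simp
      · have t1 : ∑ j ∈ Ico m (q (k + 1)), η j ≤ ∑ j ∈ Ico m (q (k + 1)), ξ j :=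
          P2' k m (by omega) (le_of_lt hm2)
        have t2 : ∑ j ∈ Ico m (q (k + 1)), ξ j ≤ ∑ j ∈ Ico m (q (k + 1)), ρ j :=
          Finset.sum_le_sum fun j _ => le_max_left _ _
        have s1 : ∑ j ∈ Ico (q k) m, ρ j + ∑ j ∈ Ico m (q (k + 1)), ρ j =
            ∑ j ∈ Ico (q k) (q (k + 1)), ρ j :=
          Finset.sum_Ico_consecutive _ hm1 (le_of_lt hm2)
        have s2 : ∑ j ∈ Ico (q k) m, η j + ∑ j ∈ Ico m (q (k + 1)), η j =
            ∑ j ∈ Ico (q k) (q (k + 1)), η j :=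
          Finset.sum_Ico_consecutive _ hm1 (le_of_lt hm2)
        have := hρsum k
        linarith
    have := hRq k
    linarith
  refine ⟨ρ, ⟨fun n => le_trans (hξ0 n) (le_max_left _ _), hρs, ?_⟩,
    fun n => le_max_left _ _, hmaj, ⟨fun k => q (k + 1) - 1, ?_, ?_⟩⟩
  · -- tendsto
    rw [Metric.tendsto_atTop]
    intro ε hε
    have hcomp : Filter.Tendsto (fun k => η (q k)) Filter.atTop (nhds 0) :=
      hηt.comp hqm.tendsto_atTop
    obtain ⟨K, hK⟩ := Metric.tendsto_atTop.1 hcomp ε hε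
    refine ⟨q K, fun j hj => ?_⟩
    have hbk : K ≤ blk q j := blk_ge q hqm hj
    have hfirst : ξ (q (blk q j)) ≤ η (q (blk q j)) := by
      have h1 := P1 (blk q j) (q (blk q j) + 1) (Nat.le_succ _)
      have h2 : δ (q (blk q j) + 1) - δ (q (blk q j)) = η (q (blk q j)) - ξ (q (blk q j)) := by
        simp only [hδdef, Finset.sum_range_succ]; ring
      linarith
    have hdlek : d (blk q j) ≤ η (q (blk q j)) := by
      -- re-derive: either block constant or not; use generic bound via sums
      set k := blk q j with hkd
      have h1 : ∑ i ∈ Ico (q k) (q (k + 1)), η i ≤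
          (Ico (q k) (q (k + 1))).card • η (q k) :=
        Finset.sum_le_card_nsmul _ _ _ fun i hi => ηa (Finset.mem_Ico.1 hi).1
      have h2 : (Ico (q k) (q (k + 1))).card • d k ≤
          ∑ i ∈ Ico (q k) (q (k + 1)), max (ξ i) (d k) :=
        Finset.card_nsmul_le_sum _ _ _ fun i _ => le_max_right _ _
      rw [hdeq k] at h2
      rw [nsmul_eq_mul] at h1 h2
      exact le_of_mul_le_mul_left (le_trans h2 h1) (cardpos k)
    have hρle : ρ j ≤ η (q (blk q j)) := by
      simp only [hρdef]
      exact max_le (le_trans (ξa (blk_le q hq0 j)) hfirst) hdlek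
    have h2 : η (q (blk q j)) ≤ η (q K) := ηa (hqm.monotone hbk)
    have h3 := hK K le_rfl
    rw [Real.dist_eq, sub_zero] at h3 ⊢
    have h0ρ : 0 ≤ ρ j := le_trans (hξ0 j) (le_max_left _ _)
    rw [abs_of_nonneg h0ρ]
    have h4 : η (q K) ≤ |η (q K)| := le_abs_self _
    linarith
  · -- strict mono of φ
    intro a b hab
    have h1 : q (a + 1) < q (b + 1) := hqm (Nat.succ_lt_succ hab)
    have h2 : 1 ≤ q (a + 1) :=
      Nat.succ_le_of_lt (Nat.lt_of_le_of_lt (Nat.zero_le (q a)) (hqlt a))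
    exact Nat.sub_lt_sub_right h2 h1
  · -- block equalities
    intro k
    have h1 : q (k + 1) - 1 + 1 = q (k + 1) := by have := hqlt k; omega
    rw [h1]
    exact hRq (k + 1)

noncomputable def XS (ξ : ℕ → ℝ) (n : ℕ) : ℝ := ∑ j ∈ Finset.range n, ξ j

/-- Invariant: from position `q` with cap `v`, the capped supply covers all future demand. -/
def GoodSt (ξ η : ℕ → ℝ) (q : ℕ) (v : ℝ) : Prop :=
  0 ≤ v ∧ ∀ m, XS ξ m - XS ξ q ≤ ∑ j ∈ Finset.Ico q m, min (η j) v

lemma XS_mono {ξ : ℕ → ℝ} (hξ0 : ∀ n, 0 ≤ ξ n) : Monotone (XS ξ) :=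
  monotone_nat_of_le_succ fun n => by
    simp only [XS, Finset.sum_range_succ]
    linarith [hξ0 n]

lemma XS_Ico (ξ : ℕ → ℝ) {a b : ℕ} (hab : a ≤ b) :
    ∑ j ∈ Ico a b, ξ j = XS ξ b - XS ξ a := by
  have := Finset.sum_range_add_sum_Ico ξ hab
  simp only [XS]
  linarith

lemma zeta_step (ξ η : ℕ → ℝ) (hξ0 : ∀ n, 0 ≤ ξ n) (hη0 : ∀ n, 0 ≤ η n)
    (hηs : ∀ n, η (n + 1) ≤ η n) (hηt : Filter.Tendsto η Filter.atTop (nhds 0))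
    (hi : ∀ m : ℕ, ∃ n : ℕ, m ≤ n ∧ ∀ n' : ℕ, m ≤ n' →
      (∑ j ∈ Finset.range n, (η j - ξ j)) ≤ ∑ j ∈ Finset.range n', (η j - ξ j))
    (q : ℕ) (v : ℝ) (hGood : GoodSt ξ η q v) :
    ∃ N c, q < N ∧ 0 ≤ c ∧ c ≤ v ∧
      (∀ m, XS ξ m - XS ξ q ≤ ∑ j ∈ Ico q m, min (η j) c) ∧
      (∑ j ∈ Ico q N, min (η j) c = XS ξ N - XS ξ q) ∧
      GoodSt ξ η N (min (η (N - 1)) c) := by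
  obtain ⟨hv, hGoodv⟩ := hGood
  have ηa : Antitone η := antitone_nat_of_succ_le hηs
  set S : Set ℝ := {c | (0 ≤ c ∧ c ≤ v) ∧
    ∀ m, XS ξ m - XS ξ q ≤ ∑ j ∈ Ico q m, min (η j) c} with hSdef
  have hvS : v ∈ S := ⟨⟨hv, le_rfl⟩, hGoodv⟩
  have hSne : S.Nonempty := ⟨v, hvS⟩
  have hSbdd : BddBelow S := ⟨0, fun c hc => hc.1.1⟩
  set c0 : ℝ := sInf S with hc0def
  have hc00 : 0 ≤ c0 := le_csInf hSne fun c hc => hc.1.1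
  have hc0v : c0 ≤ v := csInf_le hSbdd hvS
  -- sInf still satisfies the supply property
  have hc0S : ∀ m, XS ξ m - XS ξ q ≤ ∑ j ∈ Ico q m, min (η j) c0 := by
    intro m
    by_contra hcon
    push_neg at hcon
    set a : ℝ := XS ξ m - XS ξ q - ∑ j ∈ Ico q m, min (η j) c0 with hadef
    have ha0 : 0 < a := by simp only [hadef]; linarith
    have hε : 0 < a / (m + 1 : ℝ) := by positivity
    obtain ⟨c, hcS, hclt⟩ := Real.lt_sInf_add_pos hSne hε
    have h1 : c0 ≤ c := csInf_le hSbdd hcS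
    have h2 := hcS.2 m
    have hterm : ∀ j ∈ Ico q m, min (η j) c ≤ min (η j) c0 + a / (m + 1 : ℝ) := by
      intro j _
      have hcc : c - c0 < a / (m + 1 : ℝ) := by
        rw [← hc0def] at hclt
        linarith
      rcases le_total (η j) c0 with h' | h'
      · have e1 : min (η j) c0 = η j := min_eq_left h'
        have e2 : min (η j) c ≤ η j := min_le_left _ _
        linarith
      · have e1 : min (η j) c0 = c0 := min_eq_right h'
        have e2 : min (η j) c ≤ c := min_le_right _ _
        linarith
    have h3 : ∑ j ∈ Ico q m, min (η j) c ≤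
        ∑ j ∈ Ico q m, min (η j) c0 + ((Ico q m).card : ℝ) * (a / (m + 1 : ℝ)) := by
      calc ∑ j ∈ Ico q m, min (η j) c ≤ ∑ j ∈ Ico q m, (min (η j) c0 + a / (m + 1 : ℝ)) :=
            Finset.sum_le_sum hterm
      _ = ∑ j ∈ Ico q m, min (η j) c0 + ((Ico q m).card : ℝ) * (a / (m + 1 : ℝ)) := by
            rw [Finset.sum_add_distrib, Finset.sum_const, nsmul_eq_mul]
    have hcard : ((Ico q m).card : ℝ) < (m + 1 : ℝ) := by
      rw [Nat.card_Ico]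
      have : m - q ≤ m := Nat.sub_le m q
      have : ((m - q : ℕ) : ℝ) ≤ (m : ℝ) := by exact_mod_cast this
      linarith
    have h4 : ((Ico q m).card : ℝ) * (a / (m + 1 : ℝ)) < a := by
      have hm1 : (0 : ℝ) < m + 1 := by positivity
      have := mul_lt_mul_of_pos_right hcard hε
      rwa [mul_div_cancel₀ a (ne_of_gt hm1)] at this
    simp only [hadef] at ha0
    linarith
  rcases eq_or_lt_of_le hc00 with hczero | hcpos
  · -- c0 = 0 : all the remaining demand is zero
    have hmin0 : ∀ j, min (η j) (0 : ℝ) = 0 := fun j => min_eq_right (hη0 j)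
    have hS0 : ∀ m, XS ξ m - XS ξ q ≤ 0 := by
      intro m
      have := hc0S m
      rw [← hczero] at this
      calc XS ξ m - XS ξ q ≤ ∑ j ∈ Ico q m, min (η j) 0 := this
      _ = 0 := by simp [hmin0]
    have hξq : ξ q = 0 := by
      have h1 := hS0 (q + 1)
      have h2 : XS ξ (q + 1) - XS ξ q = ξ q := by
        simp only [XS, Finset.sum_range_succ]; ring
      have := hξ0 q
      linarith
    refine ⟨q + 1, 0, Nat.lt_succ_self q, le_rfl, hv, ?_, ?_, ?_⟩
    · intro m
      calc XS ξ m - XS ξ q ≤ 0 := hS0 m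
      _ ≤ ∑ j ∈ Ico q m, min (η j) 0 := by simp [hmin0]
    · rw [Nat.Ico_succ_singleton, Finset.sum_singleton, hmin0]
      have h2 : XS ξ (q + 1) - XS ξ q = ξ q := by
        simp only [XS, Finset.sum_range_succ]; ring
      rw [h2, hξq]
    · constructor
      · exact le_min (hη0 _) le_rfl
      · intro m
        have h1 : XS ξ m - XS ξ (q + 1) ≤ 0 := by
          have := hS0 m
          have h2 : XS ξ q ≤ XS ξ (q + 1) := XS_mono hξ0 (Nat.le_succ q)
          linarith
        have h3 : min (η (q + 1 - 1)) (0 : ℝ) = 0 := hmin0 _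
        rw [h3]
        calc XS ξ m - XS ξ (q + 1) ≤ 0 := h1
        _ ≤ ∑ j ∈ Ico (q + 1) m, min (η j) 0 := by simp [hmin0]
  · -- c0 > 0
    obtain ⟨j₀', hj₀'⟩ := Metric.tendsto_atTop.1 hηt c0 hcpos
    set j₀ : ℕ := max j₀' (q + 1) with hj₀def
    have hj₀q : q + 1 ≤ j₀ := le_max_right _ _
    have hηj₀ : ∀ j, j₀ ≤ j → η j < c0 := by
      intro j hj
      have := hj₀' j (le_trans (le_max_left _ _) hj)
      rw [Real.dist_eq, sub_zero] at this
      exact lt_of_le_of_lt (le_abs_self _) this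
    set G : ℕ → ℝ := fun m => ∑ j ∈ Ico q m, min (η j) c0 - (XS ξ m - XS ξ q) with hGdef
    have hG0 : ∀ m, 0 ≤ G m := fun m => by simp only [hGdef]; linarith [hc0S m]
    set D : ℕ → ℝ := fun n => ∑ j ∈ Finset.range n, (η j - ξ j) with hDdef
    have hDIco : ∀ {a b : ℕ}, a ≤ b → ∑ j ∈ Ico a b, (η j - ξ j) = D b - D a := by
      intro a b hab
      have := Finset.sum_range_add_sum_Ico (fun j => η j - ξ j) hab
      simp only [hDdef]
      linarith
    have htail : ∀ m, j₀ ≤ m → G m = G j₀ + (D m - D j₀) := by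
      intro m hm
      have hqj₀ : q ≤ j₀ := by omega
      have hsplit : ∑ j ∈ Ico q j₀, min (η j) c0 + ∑ j ∈ Ico j₀ m, min (η j) c0 =
          ∑ j ∈ Ico q m, min (η j) c0 := Finset.sum_Ico_consecutive _ hqj₀ hm
      have heta : ∑ j ∈ Ico j₀ m, min (η j) c0 = ∑ j ∈ Ico j₀ m, η j :=
        Finset.sum_congr rfl fun j hj =>
          min_eq_left (le_of_lt (hηj₀ j (Finset.mem_Ico.1 hj).1))
      have hd := hDIco hm
      rw [Finset.sum_sub_distrib] at hd
      have hx := XS_Ico ξ hm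
      simp only [hGdef]
      rw [← hsplit, heta]
      linarith
    obtain ⟨N₀, hN₀ge, hN₀min⟩ := hi j₀
    have hGN₀ : ∀ m, j₀ ≤ m → G N₀ ≤ G m := by
      intro m hm
      rw [htail N₀ hN₀ge, htail m hm]
      have := hN₀min m hm
      simp only [hDdef]
      linarith
    obtain ⟨N₁, hN₁mem, hN₁min⟩ := (Finset.Icc (q + 1) j₀).exists_min_image G
      ⟨q + 1, Finset.mem_Icc.2 ⟨le_rfl, hj₀q⟩⟩
    obtain ⟨hN₁l, hN₁r⟩ := Finset.mem_Icc.1 hN₁mem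
    obtain ⟨N, hNgt, hNmin⟩ : ∃ N, q < N ∧ ∀ m, q + 1 ≤ m → G N ≤ G m := by
      by_cases hNc : G N₀ ≤ G N₁
      · refine ⟨N₀, by omega, fun m hm => ?_⟩
        by_cases hmj : m ≤ j₀
        · exact le_trans hNc (hN₁min m (Finset.mem_Icc.2 ⟨hm, hmj⟩))
        · exact hGN₀ m (by omega)
      · push_neg at hNc
        refine ⟨N₁, by omega, fun m hm => ?_⟩
        by_cases hmj : m ≤ j₀
        · exact hN₁min m (Finset.mem_Icc.2 ⟨hm, hmj⟩)
        · exact le_trans (le_of_lt hNc) (hGN₀ m (by omega))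
    have hGNz : G N = 0 := by
      by_contra hne
      have ha : 0 < G N := lt_of_le_of_ne (hG0 N) (Ne.symm hne)
      obtain ⟨j₁', hj₁'⟩ := Metric.tendsto_atTop.1 hηt (c0 / 2) (by positivity)
      set j₁ : ℕ := max j₁' (q + 1) with hj₁def
      have hj₁q : q + 1 ≤ j₁ := le_max_right _ _
      have hηj₁ : ∀ j, j₁ ≤ j → η j < c0 / 2 := by
        intro j hj
        have := hj₁' j (le_trans (le_max_left _ _) hj)
        rw [Real.dist_eq, sub_zero] at this
        exact lt_of_le_of_lt (le_abs_self _) this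
      have hj₁gq : (1 : ℝ) ≤ ((j₁ - q : ℕ) : ℝ) := by
        have : 1 ≤ j₁ - q := by omega
        exact_mod_cast this
      set ε : ℝ := min (c0 / 2) (G N / ((j₁ - q : ℕ) : ℝ)) with hεdef
      have hε0 : 0 < ε := lt_min (by positivity) (div_pos ha (by linarith))
      have hεc : ε ≤ c0 / 2 := min_le_left _ _
      have hεG : ((j₁ - q : ℕ) : ℝ) * ε ≤ G N := by
        have h1 : ε ≤ G N / ((j₁ - q : ℕ) : ℝ) := min_le_right _ _
        have h2 : (0:ℝ) < ((j₁ - q : ℕ) : ℝ) := by linarith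
        calc ((j₁ - q : ℕ) : ℝ) * ε ≤ ((j₁ - q : ℕ) : ℝ) * (G N / ((j₁ - q : ℕ) : ℝ)) :=
              mul_le_mul_of_nonneg_left h1 (le_of_lt h2)
        _ = G N := by field_simp
      have hmem : (c0 - ε) ∈ S := by
        refine ⟨⟨by linarith, by linarith⟩, ?_⟩
        intro m
        by_cases hmq : m ≤ q
        · have h1 : Ico q m = ∅ := Finset.Ico_eq_empty (by omega)
          rw [h1, Finset.sum_empty]
          have := XS_mono hξ0 hmq
          linarith
        · push_neg at hmq
          have hterm : ∀ j ∈ Ico q m,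
              min (η j) c0 - (if j < j₁ then ε else 0) ≤ min (η j) (c0 - ε) := by
            intro j _
            by_cases hjj : j < j₁
            · rw [if_pos hjj]
              rcases le_total (η j) (c0 - ε) with h' | h'
              · rw [min_eq_left h']
                have : min (η j) c0 ≤ η j := min_le_left _ _
                linarith
              · rw [min_eq_right h']
                have : min (η j) c0 ≤ c0 := min_le_right _ _
                linarith
            · rw [if_neg hjj]
              have hj1 : η j < c0 / 2 := hηj₁ j (le_of_not_gt hjj)
              have h2 : η j ≤ c0 - ε := by linarith
              have h3 : η j ≤ c0 := by linarith
              rw [min_eq_left h2, min_eq_left h3, sub_zero]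
          have hsum1 : ∑ j ∈ Ico q m, (min (η j) c0 - (if j < j₁ then ε else 0)) ≤
              ∑ j ∈ Ico q m, min (η j) (c0 - ε) := Finset.sum_le_sum hterm
          have hsum2 : ∑ j ∈ Ico q m, (if j < j₁ then ε else 0) ≤ ((j₁ - q : ℕ) : ℝ) * ε := by
            rw [Finset.sum_ite, Finset.sum_const_zero, add_zero, Finset.sum_const, nsmul_eq_mul]
            have hsub : (Ico q m).filter (fun j => j < j₁) ⊆ Ico q j₁ := by
              intro j hj
              obtain ⟨hj1, hj2⟩ := Finset.mem_filter.1 hj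
              exact Finset.mem_Ico.2 ⟨(Finset.mem_Ico.1 hj1).1, hj2⟩
            have hcard : (((Ico q m).filter (fun j => j < j₁)).card : ℝ) ≤ ((j₁ - q : ℕ) : ℝ) := by
              have := Finset.card_le_card hsub
              rw [Nat.card_Ico] at this
              exact_mod_cast this
            exact mul_le_mul_of_nonneg_right hcard (le_of_lt hε0)
          have hsum3 : ∑ j ∈ Ico q m, (min (η j) c0 - (if j < j₁ then ε else 0)) =
              ∑ j ∈ Ico q m, min (η j) c0 - ∑ j ∈ Ico q m, (if j < j₁ then ε else 0) :=
            Finset.sum_sub_distrib _ _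
          have hGm : G N ≤ G m := hNmin m (by omega)
          have hGmv := hG0 m
          have hεG' := hεG
          simp only [hGdef] at hGm hGmv hεG'
          linarith
      have hcontr := csInf_le hSbdd hmem
      rw [← hc0def] at hcontr
      linarith
    refine ⟨N, c0, hNgt, hc00, hc0v, hc0S, ?_, ?_, ?_⟩
    · simp only [hGdef] at hGNz
      linarith
    · exact le_min (hη0 _) hc00
    · intro m
      by_cases hm : N ≤ m
      · have hqN : q ≤ N := by omega
        have hsplit : ∑ j ∈ Ico q N, min (η j) c0 + ∑ j ∈ Ico N m, min (η j) c0 =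
            ∑ j ∈ Ico q m, min (η j) c0 := Finset.sum_Ico_consecutive _ hqN hm
        have h2 : ∀ j ∈ Ico N m, min (η j) c0 ≤ min (η j) (min (η (N - 1)) c0) := by
          intro j hj
          have hjN : N ≤ j := (Finset.mem_Ico.1 hj).1
          have hja : η j ≤ η (N - 1) := ηa (by omega)
          rcases le_total (η (N - 1)) c0 with h' | h'
          · have e1 : min (η j) c0 = η j := min_eq_left (le_trans hja h')
            have e2 : η j ≤ min (η (N - 1)) c0 := le_min hja (le_trans hja h')
            rw [e1, min_eq_left e2]
          · rw [min_eq_right h']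
        have h3 := Finset.sum_le_sum h2
        have h4 := hG0 m
        simp only [hGdef] at h4 hGNz
        linarith
      · push_neg at hm
        have h1 : Ico N m = ∅ := Finset.Ico_eq_empty (by omega)
        rw [h1, Finset.sum_empty]
        have := XS_mono hξ0 (le_of_lt hm)
        linarith

lemma exists_zeta (ξ η : ℕ → ℝ) (hξ : IsC0Star ξ) (hη : IsC0Star η) (h : Maj ξ η)
    (hi : ∀ m : ℕ, ∃ n : ℕ, m ≤ n ∧ ∀ n' : ℕ, m ≤ n' →
      (∑ j ∈ Finset.range n, (η j - ξ j)) ≤ ∑ j ∈ Finset.range n', (η j - ξ j)) :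
    ∃ ζ : ℕ → ℝ, IsC0Star ζ ∧ MajB ξ ζ ∧ ∀ n, ζ n ≤ η n := by
  obtain ⟨hξ0, hξs, hξt⟩ := hξ
  obtain ⟨hη0, hηs, hηt⟩ := hη
  have ηa : Antitone η := antitone_nat_of_succ_le hηs
  have good0 : GoodSt ξ η 0 (η 0) := by
    refine ⟨hη0 0, fun m => ?_⟩
    have h1 : ∑ j ∈ Ico 0 m, min (η j) (η 0) = ∑ j ∈ range m, η j := by
      rw [← Finset.range_eq_Ico]
      exact Finset.sum_congr rfl fun j _ => min_eq_left (ηa (Nat.zero_le j))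
    rw [h1]
    have h2 := h m
    simp only [XS, Finset.range_zero, Finset.sum_empty, sub_zero]
    exact h2
  have hstep : ∀ s : {p : ℕ × ℝ // GoodSt ξ η p.1 p.2},
      ∃ t : {p : ℕ × ℝ // GoodSt ξ η p.1 p.2} × ℝ, s.val.1 < t.1.val.1 ∧ 0 ≤ t.2 ∧
        t.2 ≤ s.val.2 ∧
        (∀ m, XS ξ m - XS ξ s.val.1 ≤ ∑ j ∈ Ico s.val.1 m, min (η j) t.2) ∧
        (∑ j ∈ Ico s.val.1 t.1.val.1, min (η j) t.2 = XS ξ t.1.val.1 - XS ξ s.val.1) ∧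
        t.1.val.2 = min (η (t.1.val.1 - 1)) t.2 := by
    intro s
    obtain ⟨N, c, h1, h2, h3, h4, h5, h6⟩ :=
      zeta_step ξ η hξ0 hη0 hηs hηt hi s.val.1 s.val.2 s.prop
    exact ⟨(⟨(N, min (η (N - 1)) c), h6⟩, c), h1, h2, h3, h4, h5, rfl⟩
  choose F hF1 hF2 hF3 hF4 hF5 hF6 using hstep
  let s : ℕ → {p : ℕ × ℝ // GoodSt ξ η p.1 p.2} :=
    fun k => Nat.rec ⟨(0, η 0), good0⟩ (fun _ p => (F p).1) k
  let q : ℕ → ℕ := fun k => (s k).val.1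
  let c : ℕ → ℝ := fun k => (F (s k)).2
  let v : ℕ → ℝ := fun k => (s k).val.2
  have hq0 : q 0 = 0 := rfl
  have hqlt : ∀ k, q k < q (k + 1) := fun k => hF1 (s k)
  have hqm : StrictMono q := strictMono_nat_of_lt_succ hqlt
  have hcv : ∀ k, c k ≤ v k := fun k => hF3 (s k)
  have hc0 : ∀ k, 0 ≤ c k := fun k => hF2 (s k)
  have hGm : ∀ k m, XS ξ m - XS ξ (q k) ≤ ∑ j ∈ Ico (q k) m, min (η j) (c k) :=
    fun k => hF4 (s k)
  have heqk : ∀ k, ∑ j ∈ Ico (q k) (q (k + 1)), min (η j) (c k) =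
      XS ξ (q (k + 1)) - XS ξ (q k) := fun k => hF5 (s k)
  have hvs : ∀ k, v (k + 1) = min (η (q (k + 1) - 1)) (c k) := fun k => hF6 (s k)
  set ζ : ℕ → ℝ := fun j => min (η j) (c (blk q j)) with hζdef
  have hζeval : ∀ k j, q k ≤ j → j < q (k + 1) → ζ j = min (η j) (c k) := by
    intro k j h1 h2
    simp only [hζdef, blk_eq q hqm hq0 h1 h2]
  have hζsum : ∀ k, ∑ j ∈ Ico (q k) (q (k + 1)), ζ j = XS ξ (q (k + 1)) - XS ξ (q k) := by
    intro k
    rw [← heqk k]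
    exact Finset.sum_congr rfl fun j hj =>
      hζeval k j (Finset.mem_Ico.1 hj).1 (Finset.mem_Ico.1 hj).2
  have hZq : ∀ k, ∑ j ∈ range (q k), ζ j = XS ξ (q k) := by
    intro k
    induction k with
    | zero => rw [hq0]; simp [XS]
    | succ k ih =>
        have hsplit := Finset.sum_range_add_sum_Ico ζ (le_of_lt (hqlt k))
        rw [← hsplit, ih, hζsum k]
        ring
  have hmaj : Maj ξ ζ := by
    intro m
    set k := blk q m with hk
    have hm1 : q k ≤ m := blk_le q hq0 m
    have hm2 : m < q (k + 1) := blk_lt q hqm m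
    have hsplit := Finset.sum_range_add_sum_Ico ζ hm1
    have h1 : ∑ j ∈ Ico (q k) m, ζ j = ∑ j ∈ Ico (q k) m, min (η j) (c k) :=
      Finset.sum_congr rfl fun j hj =>
        hζeval k j (Finset.mem_Ico.1 hj).1 (lt_of_lt_of_le (Finset.mem_Ico.1 hj).2 (le_of_lt hm2))
    have h2 := hGm k m
    have h3 := hZq k
    have h4 : XS ξ m = ∑ j ∈ range m, ξ j := rfl
    rw [← hsplit, h3, h1]
    rw [h4] at h2
    linarith
  refine ⟨ζ, ⟨fun n => le_min (hη0 n) (hc0 _), ?_, ?_⟩,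
    ⟨hmaj, fun k => q (k + 1) - 1, ?_, ?_⟩, fun n => min_le_left _ _⟩
  · -- antitone
    intro j
    set k := blk q j with hk
    have hj1 : q k ≤ j := blk_le q hq0 j
    have hj2 : j < q (k + 1) := blk_lt q hqm j
    have hev : ζ j = min (η j) (c k) := hζeval k j hj1 hj2
    by_cases hb : j + 1 < q (k + 1)
    · rw [hζeval k (j + 1) (by omega) hb, hev]
      exact min_le_min (ηa (Nat.le_succ j)) le_rfl
    · have hj3 : j + 1 = q (k + 1) := by omega
      have hev2 : ζ (j + 1) = min (η (j + 1)) (c (k + 1)) := by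
        refine hζeval (k + 1) (j + 1) (by omega) ?_
        have := hqlt (k + 1)
        omega
      rw [hev2, hev]
      calc min (η (j + 1)) (c (k + 1)) ≤ c (k + 1) := min_le_right _ _
      _ ≤ v (k + 1) := hcv (k + 1)
      _ = min (η (q (k + 1) - 1)) (c k) := hvs k
      _ = min (η j) (c k) := by rw [show q (k + 1) - 1 = j by omega]
  · -- tendsto
    exact squeeze_zero (fun n => le_min (hη0 n) (hc0 _)) (fun n => min_le_left _ _) hηt
  · -- strict mono
    intro a b hab
    have h1 : q (a + 1) < q (b + 1) := hqm (Nat.succ_lt_succ hab)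
    have h2 : 1 ≤ q (a + 1) :=
      Nat.succ_le_of_lt (Nat.lt_of_le_of_lt (Nat.zero_le (q a)) (hqlt a))
    exact Nat.sub_lt_sub_right h2 h1
  · -- block equalities
    intro k
    have h1 : q (k + 1) - 1 + 1 = q (k + 1) := by have := hqlt k; omega
    rw [h1]
    exact (hZq (k + 1)).symm

end Stmt13Aux

theorem stmt_13 (ξ η : ℕ → ℝ) (hξ : IsC0Star ξ) (hη : IsC0Star η) (h : Maj ξ η) :
    ((∀ m : ℕ, ∃ n : ℕ, m ≤ n ∧ ∀ n' : ℕ, m ≤ n' →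
        (∑ j ∈ Finset.range n, (η j - ξ j)) ≤ ∑ j ∈ Finset.range n', (η j - ξ j)) ↔
      (∃ ζ : ℕ → ℝ, IsC0Star ζ ∧ MajB ξ ζ ∧ ∀ n, ζ n ≤ η n)) ∧
    ((∃ ζ : ℕ → ℝ, IsC0Star ζ ∧ MajB ξ ζ ∧ ∀ n, ζ n ≤ η n) ↔
      (∃ ρ : ℕ → ℝ, IsC0Star ρ ∧ (∀ n, ξ n ≤ ρ n) ∧ MajB ρ η)) := by
  constructor
  · constructor
    · intro hi
      exact Stmt13Aux.exists_zeta ξ η hξ hη h hi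
    · rintro ⟨ζ, _, hmb, hle⟩
      exact Stmt13Aux.condI_of_zeta ξ η ζ hle hmb
  · constructor
    · rintro ⟨ζ, _, hmb, hle⟩
      exact Stmt13Aux.exists_rho ξ η hξ hη h (Stmt13Aux.condI_of_zeta ξ η ζ hle hmb)
    · rintro ⟨ρ, _, hle, hmb⟩
      exact Stmt13Aux.exists_zeta ξ η hξ hη h (Stmt13Aux.condI_of_rho ξ η ρ hle hmb)
end

section
/- Let ξ, η ∈ c₀* with ξ ≺ η. Then: (i) there exists ζ ∈ c₀* with ξ ≼ ζ and ζ_n ≤ η_n for all n; (ii) there exists ρ ∈ c₀* with ξ_n ≤ ρ_n for all n and ρ ≼ η. -/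
/-- `ξ ≼ η`: strong majorization (`ξ ≺ η` and `liminf ∑_{j≤n}(η_j − ξ_j) = 0`). -/
def MajS (ξ η : ℕ → ℝ) : Prop :=
  Maj ξ η ∧ ∀ ε : ℝ, 0 < ε → ∀ N : ℕ, ∃ n : ℕ, N ≤ n ∧
    (∑ j ∈ Finset.range n, η j) - (∑ j ∈ Finset.range n, ξ j) < ε

open Finset Filter

noncomputable section
namespace Stmt14

def X (f : ℕ → ℝ) (n : ℕ) : ℝ := ∑ j ∈ Finset.range n, f j

lemma X_zero (f : ℕ → ℝ) : X f 0 = 0 := by simp [X]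

lemma X_succ (f : ℕ → ℝ) (n : ℕ) : X f (n+1) = X f n + f n := Finset.sum_range_succ f n

lemma X_add (f : ℕ → ℝ) {s m : ℕ} (h : s ≤ m) :
    X f m = X f s + ∑ k ∈ Finset.Ico s m, f k := by
  simp only [X, Finset.range_eq_Ico]
  exact (Finset.sum_Ico_consecutive f (Nat.zero_le s) h).symm

lemma X_mono {f : ℕ → ℝ} (hf : ∀ n, 0 ≤ f n) : Monotone (X f) := by
  intro a b hab
  rw [X_add f hab]
  have : (0:ℝ) ≤ ∑ k ∈ Finset.Ico a b, f k := Finset.sum_nonneg fun k _ => hf k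
  linarith

section PartII

variable (ξ η : ℕ → ℝ)

/-- `Iinf n = inf_{m ≥ n} (Y_m - X_m)`. -/
def Iinf (n : ℕ) : ℝ := sInf ((fun m => X η m - X ξ m) '' Set.Ici n)

def P : ℕ → ℝ × ℝ
  | 0 => (Iinf ξ η 1 + X ξ 1, Iinf ξ η 1 + X ξ 1)
  | n+1 =>
      let p := P n
      let r := min p.1 (Iinf ξ η (n+2) + X ξ (n+2) - p.2)
      (r, p.2 + r)

def ρ (n : ℕ) : ℝ := (P ξ η n).1

def c (n : ℕ) : ℝ := Iinf ξ η (n+1) + X ξ (n+1) - X (ρ ξ η) n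

lemma P_snd (n : ℕ) : (P ξ η n).2 = X (ρ ξ η) (n+1) := by
  induction n with
  | zero => simp [P, ρ, X_succ, X_zero]
  | succ n ih =>
      have h1 : (P ξ η (n+1)).2 = (P ξ η n).2 + ρ ξ η (n+1) := rfl
      rw [h1, ih, ← X_succ]

lemma rho_zero : ρ ξ η 0 = c ξ η 0 := by
  simp [ρ, c, P, X_zero]

lemma rho_succ (n : ℕ) : ρ ξ η (n+1) = min (ρ ξ η n) (c ξ η (n+1)) := by
  show min (P ξ η n).1 _ = _
  rw [P_snd]
  rfl

variable {ξ η}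
variable (hξ0 : ∀ n, 0 ≤ ξ n) (hξa : ∀ n, ξ (n+1) ≤ ξ n)
variable (hη0 : ∀ n, 0 ≤ η n) (hηa : ∀ n, η (n+1) ≤ η n) (h : Maj ξ η)

lemma Inonempty (n : ℕ) : ((fun m => X η m - X ξ m) '' Set.Ici n).Nonempty :=
  ⟨_, ⟨n, le_refl n, rfl⟩⟩

include h in
lemma Ibdd (n : ℕ) : BddBelow ((fun m => X η m - X ξ m) '' Set.Ici n) := by
  refine ⟨0, fun x hx => ?_⟩
  obtain ⟨m, _, rfl⟩ := hx
  have := h m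
  simp only [X]
  linarith

include h in
lemma Iinf_nonneg (n : ℕ) : 0 ≤ Iinf ξ η n :=
  le_csInf (Inonempty n) (fun x hx => by obtain ⟨m, _, rfl⟩ := hx; have := h m; simp only [X]; linarith)

include h in
lemma Iinf_le {n m : ℕ} (hnm : n ≤ m) : Iinf ξ η n ≤ X η m - X ξ m :=
  csInf_le (Ibdd h n) ⟨m, hnm, rfl⟩

include h in
lemma Iinf_mono (n : ℕ) : Iinf ξ η n ≤ Iinf ξ η (n+1) :=
  le_csInf (Inonempty (n+1)) (fun x hx => by
    obtain ⟨m, hm, rfl⟩ := hx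
    exact Iinf_le h (le_trans (Nat.le_succ n) hm))

include h in
lemma rho_J : ∀ n, X (ρ ξ η) n ≤ X ξ n + Iinf ξ η n := by
  intro n
  induction n with
  | zero => simpa [X_zero] using Iinf_nonneg h 0
  | succ n ih =>
      have hrc : ρ ξ η n ≤ c ξ η n := by
        cases n with
        | zero => exact le_of_eq (rho_zero ξ η)
        | succ k => rw [rho_succ]; exact min_le_right _ _
      have : X (ρ ξ η) (n+1) = X (ρ ξ η) n + ρ ξ η n := X_succ _ n
      rw [this]
      have hc : X (ρ ξ η) n + ρ ξ η n ≤ X (ρ ξ η) n + c ξ η n := by linarith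
      refine hc.trans ?_
      simp only [c]
      linarith

include h in
lemma c_ge_xi (n : ℕ) : ξ n ≤ c ξ η n := by
  have hJ := rho_J h n
  have hm := Iinf_mono h n
  have hx := X_succ ξ n
  simp only [c]
  linarith

include hξa h in
lemma xi_le_rho : ∀ n, ξ n ≤ ρ ξ η n := by
  intro n
  induction n with
  | zero => rw [rho_zero]; exact c_ge_xi h 0
  | succ n ih =>
      rw [rho_succ]
      exact le_min (le_trans (hξa n) ih) (c_ge_xi h (n+1))

include hξ0 hξa h in
lemma rho_nonneg (n : ℕ) : 0 ≤ ρ ξ η n := le_trans (hξ0 n) (xi_le_rho hξa h n)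

lemma rho_anti (n : ℕ) : ρ ξ η (n+1) ≤ ρ ξ η n := by rw [rho_succ]; exact min_le_left _ _

include h in
lemma rho_maj (n : ℕ) : X (ρ ξ η) n ≤ X η n := by
  have := rho_J h n
  have := Iinf_le h (le_refl n)
  linarith

include hξ0 hξa hη0 h in
lemma rho_iInf_zero (hηt : Filter.Tendsto η Filter.atTop (nhds 0)) :
    ⨅ n, ρ ξ η n = 0 := by
  set L := ⨅ n, ρ ξ η n with hL
  have hbdd : BddBelow (Set.range (ρ ξ η)) :=
    ⟨0, fun x ⟨n, hn⟩ => hn ▸ rho_nonneg hξ0 hξa h n⟩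
  have hL0 : 0 ≤ L := le_ciInf fun n => rho_nonneg hξ0 hξa h n
  have hLle : ∀ n, L ≤ ρ ξ η n := fun n => ciInf_le hbdd n
  rcases eq_or_lt_of_le hL0 with heq | hpos
  · exact heq.symm
  · exfalso
    have hev : ∀ᶠ k in atTop, η k < L / 2 :=
      hηt.eventually_lt_const (by linarith)
    obtain ⟨K, hK⟩ := eventually_atTop.mp hev
    set n := K + (Nat.ceil (X η K / (L / 2)) + 1) with hn
    have hKn : K ≤ n := Nat.le_add_right _ _
    have h1 : (n : ℝ) * L ≤ X (ρ ξ η) n := by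
      have := Finset.card_nsmul_le_sum (Finset.range n) (ρ ξ η) L
        (fun x _ => hLle x)
      simpa [X, nsmul_eq_mul, mul_comm] using this
    have h2 : X η n ≤ X η K + ((n : ℝ) - K) * (L / 2) := by
      rw [X_add η hKn]
      have hs := Finset.sum_le_card_nsmul (Finset.Ico K n) η (L / 2)
        (fun x hx => (hK x (Finset.mem_Ico.mp hx).1).le)
      rw [Nat.card_Ico, nsmul_eq_mul] at hs
      have hcast : ((n - K : ℕ) : ℝ) = (n : ℝ) - K := by
        push_cast [Nat.cast_sub hKn]; ring
      rw [hcast] at hs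
      linarith
    have h3 : X (ρ ξ η) n ≤ X η n := rho_maj h n
    have h4 : (n : ℝ) * (L / 2) ≤ X η K := by
      have hKnn : (0:ℝ) ≤ (K : ℝ) := Nat.cast_nonneg K
      nlinarith
    have h5 : (n : ℝ) ≤ X η K / (L / 2) := by
      rw [le_div_iff₀ (by linarith : (0:ℝ) < L / 2)]
      linarith
    have h6 : X η K / (L / 2) ≤ (Nat.ceil (X η K / (L / 2)) : ℝ) := Nat.le_ceil _
    have h7 : ((Nat.ceil (X η K / (L / 2)) : ℕ) : ℝ) + 1 ≤ (n : ℝ) := by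
      have : Nat.ceil (X η K / (L / 2)) + 1 ≤ n := by omega
      exact_mod_cast this
    linarith

include hξ0 hξa hη0 h in
lemma rho_tendsto (hηt : Filter.Tendsto η Filter.atTop (nhds 0)) :
    Filter.Tendsto (ρ ξ η) Filter.atTop (nhds 0) := by
  have hbdd : BddBelow (Set.range (ρ ξ η)) :=
    ⟨0, fun x ⟨n, hn⟩ => hn ▸ rho_nonneg hξ0 hξa h n⟩
  have := tendsto_atTop_ciInf (antitone_nat_of_succ_le (fun n => rho_anti (ξ := ξ) (η := η) n)) hbdd
  rwa [rho_iInf_zero hξ0 hξa hη0 h hηt] at this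

include hξ0 hξa hη0 hηa h in
lemma rho_liminf (hηt : Filter.Tendsto η Filter.atTop (nhds 0))
    (ε : ℝ) (hε : 0 < ε) (N : ℕ) :
    ∃ m, N ≤ m ∧ X η m - X (ρ ξ η) m < ε := by
  by_cases hA : ∃ n, N ≤ n ∧ ρ ξ η n = c ξ η n
  · obtain ⟨n, hNn, hrc⟩ := hA
    have hR : X (ρ ξ η) (n+1) = X ξ (n+1) + Iinf ξ η (n+1) := by
      rw [X_succ, hrc]
      simp only [c]
      ring
    obtain ⟨x, hx, hxlt⟩ := exists_lt_of_csInf_lt (Inonempty (n+1))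
      (lt_add_of_pos_right (Iinf ξ η (n+1)) hε)
    obtain ⟨m, hm, rfl⟩ := hx
    dsimp only at hxlt
    refine ⟨m, le_trans hNn (le_trans (Nat.le_succ n) hm), ?_⟩
    have hRm : X (ρ ξ η) (n+1) + (X ξ m - X ξ (n+1)) ≤ X (ρ ξ η) m := by
      rw [X_add (ρ ξ η) hm, X_add ξ hm]
      have : ∑ k ∈ Finset.Ico (n+1) m, ξ k ≤ ∑ k ∈ Finset.Ico (n+1) m, ρ ξ η k :=
        Finset.sum_le_sum fun k _ => xi_le_rho hξa h k
      linarith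
    have : Iinf ξ η (n+1) ≤ X η m - X ξ m - 0 := by
      simpa using Iinf_le h hm
    linarith
  · push_neg at hA
    -- ρ is constant (= 0) from N on
    have hconst : ∀ m, N ≤ m → ρ ξ η m = ρ ξ η N := by
      intro m hm
      induction m with
      | zero => simp_all
      | succ k ih =>
          rcases Nat.lt_or_ge N (k+1) with hlt | hge
          · have hk : N ≤ k := Nat.lt_succ_iff.mp hlt
            have hr := rho_succ ξ η k
            rcases min_cases (ρ ξ η k) (c ξ η (k+1)) with ⟨he, _⟩ | ⟨he, _⟩
            · rw [hr, he]; exact ih hk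
            · exact absurd (hr.trans he) (hA (k+1) hm)
          · have : N = k + 1 := le_antisymm hm hge
            rw [this]
    have hρN : ρ ξ η N = 0 := by
      have hlb : ∀ k, ρ ξ η N ≤ ρ ξ η k := by
        intro k
        rcases le_or_gt k N with hk | hk
        · exact antitone_nat_of_succ_le (fun n => rho_anti (ξ := ξ) (η := η) n) hk
        · rw [hconst k hk.le]
      have h1 : ρ ξ η N ≤ ⨅ n, ρ ξ η n := le_ciInf hlb
      have h2 : (⨅ n, ρ ξ η n) ≤ ρ ξ η N :=
        ciInf_le ⟨0, fun x ⟨n, hn⟩ => hn ▸ rho_nonneg hξ0 hξa h n⟩ N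
      have := rho_iInf_zero hξ0 hξa hη0 h hηt
      linarith
    -- first index where ρ vanishes
    have hex : ∃ n, ρ ξ η n = 0 := ⟨N, hρN⟩
    set n₀ := Nat.find hex with hn₀
    have hρn₀ : ρ ξ η n₀ = 0 := Nat.find_spec hex
    have hcn₀ : c ξ η n₀ = 0 := by
      cases hn : n₀ with
      | zero =>
          have := rho_zero ξ η
          rw [hn] at hρn₀
          linarith [hρn₀ ▸ this]
      | succ k =>
          have hkpos : ρ ξ η k ≠ 0 := Nat.find_min hex (by omega)
          have hkpos' : 0 < ρ ξ η k :=
            lt_of_le_of_ne (rho_nonneg hξ0 hξa h k) (Ne.symm hkpos)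
          have hmin : min (ρ ξ η k) (c ξ η (k+1)) = 0 := by
            rw [← rho_succ ξ η k, ← hn]; exact hρn₀
          rcases min_cases (ρ ξ η k) (c ξ η (k+1)) with ⟨he, _⟩ | ⟨he, _⟩
          · rw [he] at hmin; linarith
          · rw [he] at hmin; exact hmin
    have hξn₀ : ξ n₀ = 0 :=
      le_antisymm (hcn₀ ▸ c_ge_xi h n₀) (hξ0 n₀)
    have hξtail : ∀ k, n₀ ≤ k → ξ k = 0 := by
      intro k hk
      have ha : ξ k ≤ ξ n₀ := antitone_nat_of_succ_le hξa hk
      exact le_antisymm (hξn₀ ▸ ha) (hξ0 k)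
    have hρtail : ∀ k, n₀ ≤ k → ρ ξ η k = 0 := by
      intro k hk
      have ha : ρ ξ η k ≤ ρ ξ η n₀ := antitone_nat_of_succ_le (fun n => rho_anti (ξ := ξ) (η := η) n) hk
      exact le_antisymm (hρn₀ ▸ ha) (rho_nonneg hξ0 hξa h k)
    have hXtail : ∀ m, n₀ ≤ m → X ξ m = X ξ n₀ := by
      intro m hm
      rw [X_add ξ hm, Finset.sum_eq_zero (fun k hk => hξtail k (Finset.mem_Ico.mp hk).1)]
      ring
    have hI : Iinf ξ η (n₀+1) = X η (n₀+1) - X ξ (n₀+1) := by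
      refine le_antisymm (Iinf_le h (le_refl _)) ?_
      refine le_csInf (Inonempty _) (fun x hx => ?_)
      obtain ⟨m, hm, rfl⟩ := hx
      dsimp only
      have h1 : X η (n₀+1) ≤ X η m := X_mono hη0 hm
      have h2 : X ξ m = X ξ (n₀+1) := by
        rw [hXtail m (le_trans (Nat.le_succ n₀) hm), hXtail (n₀+1) (Nat.le_succ n₀)]
      linarith
    have hYc : X η (n₀+1) = X (ρ ξ η) n₀ := by
      have := hcn₀
      simp only [c, hI] at this
      linarith
    have hηn₀ : η n₀ = 0 := by
      have h1 : X (ρ ξ η) n₀ ≤ X η n₀ := rho_maj h n₀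
      have h2 : X η (n₀+1) = X η n₀ + η n₀ := X_succ η n₀
      have := hη0 n₀
      linarith
    have hηtail : ∀ k, n₀ ≤ k → η k = 0 := by
      intro k hk
      have ha : η k ≤ η n₀ := antitone_nat_of_succ_le hηa hk
      exact le_antisymm (hηn₀ ▸ ha) (hη0 k)
    refine ⟨max N n₀, le_max_left _ _, ?_⟩
    have hm₀ : n₀ ≤ max N n₀ := le_max_right _ _
    have hYm : X η (max N n₀) = X η n₀ := by
      rw [X_add η hm₀, Finset.sum_eq_zero (fun k hk => hηtail k (Finset.mem_Ico.mp hk).1)]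
      ring
    have hRm : X (ρ ξ η) (max N n₀) = X (ρ ξ η) n₀ := by
      rw [X_add (ρ ξ η) hm₀,
        Finset.sum_eq_zero (fun k hk => hρtail k (Finset.mem_Ico.mp hk).1)]
      ring
    have hYn₀ : X η (n₀+1) = X η n₀ + η n₀ := X_succ η n₀
    rw [hYm, hRm]
    have : X η n₀ = X (ρ ξ η) n₀ := by rw [← hYc, hYn₀, hηn₀]; ring
    linarith

end PartII

section PartI

variable (ξ η : ℕ → ℝ)

/-- Feasibility set at step `n`, given cap `cap` and current partial sum `Z`. -/
def Sset (n : ℕ) (cap Z : ℝ) : Set ℝ :=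
  {v | 0 ≤ v ∧ v ≤ cap ∧ ∀ m, n ≤ m → X ξ m ≤ Z + ∑ k ∈ Finset.Ico n m, min v (η k)}

def Q : ℕ → ℝ × ℝ
  | 0 => (η 0, 0)
  | n+1 =>
    let p := Q n
    let z := min (η n) (sInf (Sset ξ η n p.1 p.2))
    (z, p.2 + z)

def vmin (n : ℕ) : ℝ := sInf (Sset ξ η n (Q ξ η n).1 (Q ξ η n).2)
def ζ (n : ℕ) : ℝ := (Q ξ η (n+1)).1
def Zp (n : ℕ) : ℝ := (Q ξ η n).2

lemma zeta_eq (n : ℕ) : ζ ξ η n = min (η n) (vmin ξ η n) := rfl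
lemma Zp_zero : Zp ξ η 0 = 0 := rfl
lemma Zp_succ (n : ℕ) : Zp ξ η (n+1) = Zp ξ η n + ζ ξ η n := rfl
lemma cap_succ (n : ℕ) : (Q ξ η (n+1)).1 = ζ ξ η n := rfl

lemma Zp_sum (n : ℕ) : Zp ξ η n = X (ζ ξ η) n := by
  induction n with
  | zero => simp [Zp_zero, X_zero]
  | succ n ih => rw [Zp_succ, ih, X_succ]

lemma S_bddBelow (n : ℕ) (cap Z : ℝ) : BddBelow (Sset ξ η n cap Z) :=
  ⟨0, fun x hx => hx.1⟩

lemma sInf_mem_S (n : ℕ) (cap Z : ℝ) (hne : (Sset ξ η n cap Z).Nonempty) :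
    sInf (Sset ξ η n cap Z) ∈ Sset ξ η n cap Z := by
  have hbdd := S_bddBelow ξ η n cap Z
  set S := Sset ξ η n cap Z with hS
  set w := sInf S with hw
  have hw0 : 0 ≤ w := le_csInf hne fun x hx => hx.1
  refine ⟨hw0, ?_, ?_⟩
  · obtain ⟨x, hx⟩ := hne
    exact le_trans (csInf_le hbdd hx) hx.2.1
  · intro m hm
    by_contra hcon
    push_neg at hcon
    set θ := X ξ m - (Z + ∑ k ∈ Finset.Ico n m, min w (η k)) with hθ
    have hθpos : 0 < θ := by simp only [hθ]; linarith
    have hδ : (0:ℝ) < θ / (m + 1) := by positivity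
    obtain ⟨u, huS, hu⟩ := exists_lt_of_csInf_lt hne (lt_add_of_pos_right w hδ)
    have hle : X ξ m ≤ Z + ∑ k ∈ Finset.Ico n m, min u (η k) := huS.2.2 m hm
    have hsum : ∑ k ∈ Finset.Ico n m, min u (η k)
        ≤ ∑ k ∈ Finset.Ico n m, min w (η k) + ((m : ℝ) - n) * (θ / (m+1)) := by
      have hterm : ∀ k ∈ Finset.Ico n m, min u (η k) ≤ min w (η k) + θ/(m+1) := by
        intro k _
        have h1 : min u (η k) ≤ min (w + θ/(m+1)) (η k + θ/(m+1)) :=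
          min_le_min hu.le (le_add_of_nonneg_right hδ.le)
        rw [min_add_add_right] at h1
        exact h1
      have h2 := Finset.sum_le_sum hterm
      rw [Finset.sum_add_distrib, Finset.sum_const, Nat.card_Ico, nsmul_eq_mul] at h2
      have hcast : ((m - n : ℕ) : ℝ) = (m : ℝ) - n := by rw [Nat.cast_sub hm]
      rw [hcast] at h2
      exact h2
    have hfin : ((m : ℝ) - n) * (θ / (m+1)) < θ := by
      have hn0 : (0:ℝ) ≤ (n:ℝ) := Nat.cast_nonneg n
      have hid : θ = (θ/((m:ℝ)+1))*((m:ℝ)+1) := by field_simp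
      nlinarith [hδ]
    linarith

variable {ξ η}
variable (hξ0 : ∀ n, 0 ≤ ξ n) (hη0 : ∀ n, 0 ≤ η n)
  (hηa : ∀ n, η (n+1) ≤ η n) (h : Maj ξ η)

include hη0 hηa h in
lemma capmem : ∀ n, (Q ξ η n).1 ∈ Sset ξ η n (Q ξ η n).1 (Q ξ η n).2 := by
  have hηanti : Antitone η := antitone_nat_of_succ_le hηa
  intro n
  induction n with
  | zero =>
      refine ⟨hη0 0, le_rfl, fun m _ => ?_⟩
      show X ξ m ≤ (0:ℝ) + ∑ k ∈ Finset.Ico 0 m, min (η 0) (η k)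
      have : ∑ k ∈ Finset.Ico 0 m, min (η 0) (η k) = X η m := by
        rw [X, Finset.range_eq_Ico]
        exact Finset.sum_congr rfl fun k _ => min_eq_right (hηanti (Nat.zero_le k))
      rw [this]
      have := h m
      simp only [X]
      linarith
  | succ n ih =>
      have hv := sInf_mem_S ξ η n (Q ξ η n).1 (Q ξ η n).2 ⟨_, ih⟩
      have hv' : vmin ξ η n ∈ Sset ξ η n (Q ξ η n).1 (Q ξ η n).2 := hv
      refine ⟨le_min (hη0 n) hv'.1, le_rfl, fun m hm => ?_⟩
      have hnm : n ≤ m := le_trans (Nat.le_succ n) hm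
      have hcon := hv'.2.2 m hnm
      have hlt : n < m := hm
      rw [Finset.sum_eq_sum_Ico_succ_bot hlt] at hcon
      have hQ1 : (Q ξ η (n+1)).1 = min (η n) (vmin ξ η n) := rfl
      have hQ2 : (Q ξ η (n+1)).2 = (Q ξ η n).2 + min (η n) (vmin ξ η n) := rfl
      rw [hQ1, hQ2]
      have hsum_eq : ∑ k ∈ Finset.Ico (n+1) m, min (min (η n) (vmin ξ η n)) (η k)
          = ∑ k ∈ Finset.Ico (n+1) m, min (vmin ξ η n) (η k) := by
        refine Finset.sum_congr rfl fun k hk => ?_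
        have hk1 : n + 1 ≤ k := (Finset.mem_Ico.mp hk).1
        have hηk : η k ≤ η n := hηanti (le_trans (Nat.le_succ n) hk1)
        rw [min_comm (η n) (vmin ξ η n), min_assoc, min_eq_right hηk]
      rw [hsum_eq]
      have hminc : min (vmin ξ η n) (η n) = min (η n) (vmin ξ η n) := min_comm _ _
      linarith [hcon, hminc ▸ le_refl (min (vmin ξ η n) (η n))]

include hη0 hηa h in
lemma vmin_mem (n : ℕ) : vmin ξ η n ∈ Sset ξ η n (Q ξ η n).1 (Q ξ η n).2 :=
  sInf_mem_S ξ η n _ _ ⟨_, capmem hη0 hηa h n⟩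

include hη0 hηa h in
lemma vmin_le_cap (n : ℕ) : vmin ξ η n ≤ (Q ξ η n).1 :=
  (vmin_mem hη0 hηa h n).2.1

include hη0 hηa h in
lemma zeta_nonneg (n : ℕ) : 0 ≤ ζ ξ η n :=
  le_min (hη0 n) (vmin_mem hη0 hηa h n).1

lemma zeta_le_eta (n : ℕ) : ζ ξ η n ≤ η n := min_le_left _ _

include hη0 hηa h in
lemma zeta_anti (n : ℕ) : ζ ξ η (n+1) ≤ ζ ξ η n := by
  have h1 : ζ ξ η (n+1) ≤ vmin ξ η (n+1) := min_le_right _ _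
  have h2 := vmin_le_cap hη0 hηa h (n+1)
  rw [cap_succ] at h2
  linarith

include hη0 hηa h in
lemma zeta_maj (n : ℕ) : X ξ n ≤ Zp ξ η n := by
  have := (vmin_mem hη0 hηa h n).2.2 n le_rfl
  exact (by simpa using this : X ξ n ≤ (Q ξ η n).2)

include hξ0 hη0 hηa h in
lemma zeta_liminf (hηt : Filter.Tendsto η Filter.atTop (nhds 0))
    (ε : ℝ) (hε : 0 < ε) (N : ℕ) :
    ∃ m, N ≤ m ∧ Zp ξ η m - X ξ m < ε := by
  have hζanti : Antitone (ζ ξ η) := antitone_nat_of_succ_le (zeta_anti hη0 hηa h)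
  have hvN := vmin_mem hη0 hηa h N
  rcases eq_or_lt_of_le hvN.1 with hv0 | hvpos
  · -- vmin N = 0 : the tail of ζ is zero
    have hv0' : vmin ξ η N = 0 := hv0.symm
    have hζN : ζ ξ η N = 0 := by
      rw [zeta_eq, hv0', min_eq_right (hη0 N)]
    have hζtail : ∀ k, N ≤ k → ζ ξ η k = 0 := fun k hk =>
      le_antisymm (hζN ▸ hζanti hk) (zeta_nonneg hη0 hηa h k)
    have hZconst : ∀ m, N ≤ m → Zp ξ η m = Zp ξ η N := by
      intro m hm
      rw [Zp_sum, Zp_sum, X_add (ζ ξ η) hm,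
        Finset.sum_eq_zero (fun k hk => hζtail k (Finset.mem_Ico.mp hk).1)]
      ring
    have hub : ∀ m, X ξ m ≤ Zp ξ η N := by
      intro m
      rcases le_or_gt N m with hm | hm
      · have := hvN.2.2 m hm
        rw [hv0'] at this
        have hzero : ∑ k ∈ Finset.Ico N m, min (0:ℝ) (η k) = 0 :=
          Finset.sum_eq_zero fun k _ => min_eq_left (hη0 k)
        rw [hzero] at this
        have hZQ : Zp ξ η N = (Q ξ η N).2 := rfl
        linarith
      · exact le_trans (X_mono hξ0 hm.le) (zeta_maj hη0 hηa h N)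
    set B := sSup (Set.range (X ξ)) with hB
    have hbddX : BddAbove (Set.range (X ξ)) := ⟨Zp ξ η N, fun x ⟨m, hm⟩ => hm ▸ hub m⟩
    have hXB : ∀ m, X ξ m ≤ B := fun m => le_csSup hbddX ⟨m, rfl⟩
    have hZB : ∀ j, Zp ξ η j ≤ B := by
      intro j
      induction j with
      | zero => rw [Zp_zero, ← X_zero ξ]; exact hXB 0
      | succ j ihj =>
          by_contra hBlt
          push_neg at hBlt
          rw [Zp_succ] at hBlt
          set v' := B - Zp ξ η j with hv'
          have hv'lt : v' < ζ ξ η j := by simp only [hv']; linarith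
          have hζj_le_v : ζ ξ η j ≤ vmin ξ η j := min_le_right _ _
          have hζj_le_η : ζ ξ η j ≤ η j := min_le_left _ _
          have hmem : v' ∈ Sset ξ η j (Q ξ η j).1 (Q ξ η j).2 := by
            refine ⟨by simp only [hv']; linarith, ?_, ?_⟩
            · have := vmin_le_cap hη0 hηa h j
              linarith
            · intro m hm
              rcases eq_or_lt_of_le hm with heq | hlt
              · rw [← heq]
                simpa [Zp] using zeta_maj hη0 hηa h j
              · have hXm : X ξ m ≤ B := hXB m
                have hfirst : min v' (η j) = v' := min_eq_left (by linarith)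
                have hsum : v' ≤ ∑ k ∈ Finset.Ico j m, min v' (η k) := by
                  have hjm : j ∈ Finset.Ico j m := Finset.mem_Ico.mpr ⟨le_rfl, hlt⟩
                  have := Finset.single_le_sum
                    (f := fun k => min v' (η k))
                    (fun k _ => le_min (by simp only [hv']; linarith) (hη0 k)) hjm
                  rwa [hfirst] at this
                have hZj : Zp ξ η j = (Q ξ η j).2 := rfl
                rw [← hZj]
                simp only [hv'] at hsum ⊢
                linarith
          have := csInf_le (S_bddBelow ξ η j _ _) hmem
          have hvm : vmin ξ η j ≤ v' := this
          linarith
    obtain ⟨x, ⟨m', rfl⟩, hx⟩ := exists_lt_of_lt_csSup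
      (⟨X ξ 0, 0, rfl⟩ : (Set.range (X ξ)).Nonempty) (show B - ε < B by linarith)
    refine ⟨max N m', le_max_left _ _, ?_⟩
    have h1 : Zp ξ η (max N m') = Zp ξ η N := hZconst _ (le_max_left _ _)
    have h2 : X ξ m' ≤ X ξ (max N m') := X_mono hξ0 (le_max_right _ _)
    have h3 : Zp ξ η N ≤ B := hZB N
    linarith
  · -- vmin N > 0
    set v := vmin ξ η N with hv
    obtain ⟨K, hK⟩ := eventually_atTop.mp (hηt.eventually_lt_const (by linarith : (0:ℝ) < v/2))
    set δ := min (v/2) (ε/(K+1)) with hδ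
    have hδpos : 0 < δ := lt_min (by linarith) (by positivity)
    have hδle : δ ≤ v/2 := min_le_left _ _
    have hδle2 : δ ≤ ε/(K+1) := min_le_right _ _
    have hnotmem : v - δ ∉ Sset ξ η N (Q ξ η N).1 (Q ξ η N).2 := by
      intro hmem
      have h2 : v ≤ v - δ := csInf_le (S_bddBelow ξ η N _ _) hmem
      linarith
    have hcon : ¬ (∀ m, N ≤ m → X ξ m ≤ (Q ξ η N).2 + ∑ k ∈ Finset.Ico N m, min (v - δ) (η k)) := by
      intro hc
      exact hnotmem ⟨by linarith, by linarith [vmin_le_cap hη0 hηa h N], hc⟩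
    push_neg at hcon
    obtain ⟨m, hNm, hlt⟩ := hcon
    refine ⟨m, hNm, ?_⟩
    have hZm : Zp ξ η m = Zp ξ η N + ∑ k ∈ Finset.Ico N m, ζ ξ η k := by
      rw [Zp_sum, Zp_sum]; exact X_add (ζ ξ η) hNm
    have hζbound : ∀ k ∈ Finset.Ico N m, ζ ξ η k ≤ min v (η k) := by
      intro k hk
      have hk1 := (Finset.mem_Ico.mp hk).1
      refine le_min ?_ (zeta_le_eta (ξ := ξ) (η := η) k)
      exact le_trans (hζanti hk1) (le_trans (min_le_right _ _) le_rfl)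
    have hsum1 : ∑ k ∈ Finset.Ico N m, ζ ξ η k ≤ ∑ k ∈ Finset.Ico N m, min v (η k) :=
      Finset.sum_le_sum hζbound
    have hsum2 : ∑ k ∈ Finset.Ico N m, min v (η k)
        ≤ ∑ k ∈ Finset.Ico N m, min (v - δ) (η k) + (K : ℝ) * δ := by
      have hterm : ∀ k ∈ Finset.Ico N m,
          min v (η k) ≤ min (v - δ) (η k) + (if k < K then δ else 0) := by
        intro k _
        by_cases hkK : k < K
        · simp only [hkK, if_true]
          have h1 : min v (η k) ≤ min ((v - δ) + δ) (η k + δ) :=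
            min_le_min (by linarith) (by linarith)
          rw [min_add_add_right] at h1
          exact h1
        · simp only [hkK, if_false]
          push_neg at hkK
          have hηk : η k < v/2 := hK k hkK
          have he1 : min v (η k) = η k := min_eq_right (by linarith)
          have he2 : min (v - δ) (η k) = η k := min_eq_right (by linarith)
          rw [he1, he2]
          linarith
      have h2 := Finset.sum_le_sum hterm
      rw [Finset.sum_add_distrib] at h2
      have h3 : ∑ k ∈ Finset.Ico N m, (if k < K then δ else 0) ≤ (K:ℝ) * δ := by
        rw [← Finset.sum_filter]
        have hsub : (Finset.Ico N m).filter (· < K) ⊆ Finset.range K := by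
          intro x hx
          rw [Finset.mem_range]
          exact (Finset.mem_filter.mp hx).2
        have := Finset.card_le_card hsub
        rw [Finset.sum_const, nsmul_eq_mul]
        have hc : ((Finset.filter (· < K) (Finset.Ico N m)).card : ℝ) ≤ (K : ℝ) := by
          rw [Finset.card_range] at this
          exact_mod_cast this
        nlinarith
      linarith
    have hKδ : (K:ℝ) * δ < ε := by
      have h1 : (K:ℝ) * δ ≤ (K:ℝ) * (ε/(K+1)) := by
        have : (0:ℝ) ≤ (K:ℝ) := Nat.cast_nonneg K
        nlinarith
      have h2 : (K:ℝ) * (ε/(K+1)) < ε := by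
        have hK1 : (0:ℝ) < (K:ℝ) + 1 := by positivity
        rw [mul_div_assoc'] -- (K*ε)/(K+1) < ε
        rw [div_lt_iff₀ hK1]
        nlinarith [Nat.cast_nonneg (α := ℝ) K]
      linarith
    have hZN : Zp ξ η N = (Q ξ η N).2 := rfl
    rw [hZN] at hZm
    linarith

end PartI
end Stmt14

end

theorem stmt_14 (ξ η : ℕ → ℝ) (hξ : IsC0Star ξ) (hη : IsC0Star η) (h : Maj ξ η) :
    (∃ ζ : ℕ → ℝ, IsC0Star ζ ∧ MajS ξ ζ ∧ ∀ n, ζ n ≤ η n) ∧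
    (∃ ρ : ℕ → ℝ, IsC0Star ρ ∧ (∀ n, ξ n ≤ ρ n) ∧ MajS ρ η) := by
  obtain ⟨hξ0, hξa, hξt⟩ := hξ
  obtain ⟨hη0, hηa, hηt⟩ := hη
  constructor
  · refine ⟨Stmt14.ζ ξ η, ⟨fun n => Stmt14.zeta_nonneg hη0 hηa h n,
      fun n => Stmt14.zeta_anti hη0 hηa h n,
      squeeze_zero (fun n => Stmt14.zeta_nonneg hη0 hηa h n)
        (fun n => Stmt14.zeta_le_eta (ξ := ξ) (η := η) n) hηt⟩,
      ⟨?_, ?_⟩, fun n => Stmt14.zeta_le_eta (ξ := ξ) (η := η) n⟩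
    · intro n
      have h1 := Stmt14.zeta_maj hη0 hηa h n
      rw [Stmt14.Zp_sum] at h1
      simpa [Stmt14.X] using h1
    · intro ε hε N
      obtain ⟨m, hm, hlt⟩ := Stmt14.zeta_liminf hξ0 hη0 hηa h hηt ε hε N
      refine ⟨m, hm, ?_⟩
      rw [Stmt14.Zp_sum] at hlt
      simpa [Stmt14.X] using hlt
  · refine ⟨Stmt14.ρ ξ η, ⟨fun n => Stmt14.rho_nonneg hξ0 hξa h n,
      fun n => Stmt14.rho_anti (ξ := ξ) (η := η) n,
      Stmt14.rho_tendsto hξ0 hξa hη0 h hηt⟩,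
      fun n => Stmt14.xi_le_rho hξa h n, ?_, ?_⟩
    · intro n
      have h1 := Stmt14.rho_maj h n
      simpa [Stmt14.X] using h1
    · intro ε hε N
      obtain ⟨m, hm, hlt⟩ := Stmt14.rho_liminf hξ0 hξa hη0 hηa h hηt ε hε N
      refine ⟨m, hm, ?_⟩
      simpa [Stmt14.X] using hlt
end

section
/- Let ξ, η ∈ (ℓ¹)* with ξ ≺_∞ η. Then: (i) there exists ζ ∈ (ℓ¹)* with ξ ≼_∞ ζ and ζ_n ≤ η_n for all n; (ii) there exists ρ ∈ (ℓ¹)* with ξ_n ≤ ρ_n for all n and ρ ≼_∞ η. -/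
/-- `ξ ≺_∞ η`: majorization at infinity, `∑_{j=n}^∞ ξ_j ≤ ∑_{j=n}^∞ η_j` for every `n`. -/
def MajInf (ξ η : ℕ → ℝ) : Prop :=
  ∀ n : ℕ, (∑' k : ℕ, ξ (n + k)) ≤ ∑' k : ℕ, η (n + k)

/-- `ξ ≼_∞ η`: strong majorization at infinity (`ξ ≺_∞ η` and equal total sums). -/
def MajSInf (ξ η : ℕ → ℝ) : Prop :=
  MajInf ξ η ∧ (∑' j : ℕ, ξ j) = ∑' j : ℕ, η j

open Filter Finset

private lemma aux_tail_summable {f : ℕ → ℝ} (hf : Summable f) (n : ℕ) :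
    Summable fun k => f (n + k) := by
  have := (summable_nat_add_iff n).2 hf
  simpa [add_comm] using this

private lemma aux_tail_succ {f : ℕ → ℝ} (hf : Summable f) (n : ℕ) :
    (∑' k, f (n + k)) = f n + ∑' k, f (n + 1 + k) := by
  have h := Summable.tsum_eq_zero_add (aux_tail_summable hf n)
  simpa [add_comm, add_assoc, add_left_comm] using h

private lemma aux_tail_tendsto {f : ℕ → ℝ} (_hf : Summable f) :
    Filter.Tendsto (fun n => ∑' k, f (n + k)) Filter.atTop (nhds 0) := by
  have := tendsto_sum_nat_add f
  simpa [add_comm] using this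

private lemma aux_hasSum_tail {R : ℕ → ℝ} (hmono : ∀ n, R (n + 1) ≤ R n)
    (hlim : Filter.Tendsto R Filter.atTop (nhds 0)) (n : ℕ) :
    HasSum (fun k => R (n + k) - R (n + k + 1)) (R n) := by
  have hanti : Antitone R := antitone_nat_of_succ_le hmono
  have hR0 : ∀ m, 0 ≤ R m := fun m =>
    le_of_tendsto hlim (eventually_atTop.2 ⟨m, fun k hk => hanti hk⟩)
  have hnn : ∀ k : ℕ, 0 ≤ R (n + k) - R (n + k + 1) := fun k => sub_nonneg.2 (hmono _)
  have hps : ∀ N, ∑ i ∈ range N, (R (n + i) - R (n + i + 1)) = R n - R (n + N) := by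
    intro N
    simpa [← add_assoc] using Finset.sum_range_sub' (fun i => R (n + i)) N
  rw [hasSum_iff_tendsto_nat_of_nonneg hnn]
  have h1 : Tendsto (fun N => R (n + N)) atTop (nhds 0) := by
    have := hlim.comp (tendsto_add_atTop_nat n)
    simpa [Function.comp_def, add_comm] using this
  have h2 : Tendsto (fun N => R n - R (n + N)) atTop (nhds (R n - 0)) :=
    tendsto_const_nhds.sub h1
  simpa [hps] using h2

/-- The recursively defined tail-sum sequence for part (i). -/
private noncomputable def Zseq (X η : ℕ → ℝ) : ℕ → ℝ
  | 0 => X 0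
  | n + 1 => max (X (n + 1)) (Zseq X η n - η n)

theorem stmt_15 (ξ η : ℕ → ℝ) (hξ : IsC0Star ξ) (hη : IsC0Star η)
    (hξs : Summable ξ) (hηs : Summable η) (h : MajInf ξ η) :
    (∃ ζ : ℕ → ℝ, IsC0Star ζ ∧ Summable ζ ∧ MajSInf ξ ζ ∧ ∀ n, ζ n ≤ η n) ∧
    (∃ ρ : ℕ → ℝ, IsC0Star ρ ∧ Summable ρ ∧ (∀ n, ξ n ≤ ρ n) ∧ MajSInf ρ η) := by
  obtain ⟨hξ0, hξm, hξt⟩ := hξ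
  obtain ⟨hη0, hηm, hηt⟩ := hη
  set X : ℕ → ℝ := fun n => ∑' k, ξ (n + k) with hXdef
  set H : ℕ → ℝ := fun n => ∑' k, η (n + k) with hHdef
  have hXn : ∀ n, X n = ∑' k, ξ (n + k) := fun n => rfl
  have hHn : ∀ n, H n = ∑' k, η (n + k) := fun n => rfl
  have hXs : ∀ n, X n = ξ n + X (n + 1) := fun n => aux_tail_succ hξs n
  have hHs : ∀ n, H n = η n + H (n + 1) := fun n => aux_tail_succ hηs n
  have hXH : ∀ n, X n ≤ H n := h
  have hX0 : ∀ n, 0 ≤ X n := fun n => tsum_nonneg fun k => hξ0 _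
  have hH0 : ∀ n, 0 ≤ H n := fun n => tsum_nonneg fun k => hη0 _
  have hXt : Tendsto X atTop (nhds 0) := aux_tail_tendsto hξs
  have hHt : Tendsto H atTop (nhds 0) := aux_tail_tendsto hηs
  have hXdec : ∀ n, X (n + 1) ≤ X n := fun n => by have := hXs n; have := hξ0 n; linarith
  have hξanti : Antitone ξ := antitone_nat_of_succ_le hξm
  have hηanti : Antitone η := antitone_nat_of_succ_le hηm
  have hXtot : (∑' j, ξ j) = X 0 := by rw [hXn 0]; exact tsum_congr fun k => by rw [Nat.zero_add]
  have hHtot : (∑' j, η j) = H 0 := by rw [hHn 0]; exact tsum_congr fun k => by rw [Nat.zero_add]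
  constructor
  · -- Part (i)
    set Z : ℕ → ℝ := Zseq X η with hZdef
    have hZ0 : Z 0 = X 0 := rfl
    have hZsucc : ∀ n, Z (n + 1) = max (X (n + 1)) (Z n - η n) := fun n => rfl
    have hZX : ∀ n, X n ≤ Z n := by
      intro n
      cases n with
      | zero => exact le_of_eq hZ0.symm
      | succ m => rw [hZsucc m]; exact le_max_left _ _
    have hZH : ∀ n, Z n ≤ H n := by
      intro n
      induction n with
      | zero => rw [hZ0]; exact hXH 0
      | succ m ih =>
        rw [hZsucc m]
        refine max_le (hXH (m + 1)) ?_
        have := hHs m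
        linarith
    have hZmono : ∀ n, Z (n + 1) ≤ Z n := by
      intro n
      rw [hZsucc n]
      refine max_le (le_trans (hXdec n) (hZX n)) ?_
      have := hη0 n
      linarith
    have hZt : Tendsto Z atTop (nhds 0) :=
      tendsto_of_tendsto_of_tendsto_of_le_of_le hXt hHt hZX hZH
    have hZnn : ∀ n, 0 ≤ Z n := fun n => le_trans (hX0 n) (hZX n)
    set ζ : ℕ → ℝ := fun n => Z n - Z (n + 1) with hζdef
    have hζn : ∀ n, ζ n = Z n - Z (n + 1) := fun n => rfl
    have hζsum : ∀ n, HasSum (fun k => ζ (n + k)) (Z n) := fun n => aux_hasSum_tail hZmono hZt n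
    have hζ0 : ∀ n, 0 ≤ ζ n := fun n => sub_nonneg.2 (hZmono n)
    have hζη : ∀ n, ζ n ≤ η n := by
      intro n
      have : Z n - η n ≤ Z (n + 1) := by rw [hZsucc n]; exact le_max_right _ _
      rw [hζn n]; linarith
    have hζm : ∀ n, ζ (n + 1) ≤ ζ n := by
      intro n
      rcases le_total (X (n + 1)) (Z n - η n) with hc | hc
      · have e : Z (n + 1) = Z n - η n := by rw [hZsucc n, max_eq_right hc]
        have h1 : ζ (n + 1) ≤ η (n + 1) := hζη (n + 1)
        have h2 := hηm n
        rw [hζn n, e]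
        linarith
      · have e : Z (n + 1) = X (n + 1) := by rw [hZsucc n, max_eq_left hc]
        have h1 : X (n + 2) ≤ Z (n + 2) := hZX (n + 2)
        have h2 : X n ≤ Z n := hZX n
        have hx1 : X (n + 1) = ξ (n + 1) + X (n + 2) := hXs (n + 1)
        have hx0 : X n = ξ n + X (n + 1) := hXs n
        have h3 := hξm n
        rw [hζn n, hζn (n + 1), e]
        linarith
    have hζt : Tendsto ζ atTop (nhds 0) := by
      refine tendsto_of_tendsto_of_tendsto_of_le_of_le tendsto_const_nhds hZt hζ0 ?_
      intro n
      rw [hζn n]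
      have := hZnn (n + 1)
      linarith
    refine ⟨ζ, ⟨hζ0, hζm, hζt⟩, ?_, ⟨?_, ?_⟩, hζη⟩
    · have := (hζsum 0).summable
      have e : (fun k => ζ (0 + k)) = ζ := by funext k; rw [Nat.zero_add]
      rwa [e] at this
    · intro n
      rw [← hXn n, (hζsum n).tsum_eq]
      exact hZX n
    · rw [hXtot, (by
        have e : (fun k => ζ (0 + k)) = ζ := by funext k; rw [Nat.zero_add]
        have := (hζsum 0).tsum_eq
        rwa [e] at this : (∑' j, ζ j) = Z 0), hZ0]
  · -- Part (ii)
    set c : ℝ := H 0 - X 1 with hcdef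
    have hcξ : ∀ n, ξ n ≤ c := by
      intro n
      have h1 : ξ n ≤ ξ 0 := hξanti (Nat.zero_le n)
      have h2 : X 0 = ξ 0 + X 1 := hXs 0
      have h3 : X 0 ≤ H 0 := hXH 0
      rw [hcdef]; linarith
    have hcη : ∀ n, η n ≤ c := by
      intro n
      have h1 : η n ≤ η 0 := hηanti (Nat.zero_le n)
      have h2 : H 0 = η 0 + H 1 := hHs 0
      have h3 : X 1 ≤ H 1 := hXH 1
      rw [hcdef]; linarith
    have hc0 : 0 ≤ c := le_trans (hη0 0) (hcη 0)
    set R : ℕ → ℝ := fun n => max (X n) (H 0 - n * c) with hRdef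
    have hRn : ∀ n : ℕ, R n = max (X n) (H 0 - n * c) := fun n => rfl
    have hXR : ∀ n, X n ≤ R n := fun n => le_max_left _ _
    have hbR : ∀ n : ℕ, H 0 - n * c ≤ R n := fun n => le_max_right _ _
    have hR0eq : R 0 = H 0 := by
      rw [hRn 0]
      simp [max_eq_right (hXH 0)]
    have hsum_range : ∀ n : ℕ, H 0 - H n = ∑ j ∈ range n, η j := by
      intro n
      induction n with
      | zero => simp
      | succ m ih =>
        rw [Finset.sum_range_succ, ← ih]
        have := hHs m
        linarith
    have hRH : ∀ n, R n ≤ H n := by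
      intro n
      rw [hRn n]
      refine max_le (hXH n) ?_
      have h1 : H 0 - H n ≤ n * c := by
        rw [hsum_range n]
        calc (∑ j ∈ range n, η j) ≤ ∑ _j ∈ range n, c := Finset.sum_le_sum fun j _ => hcη j
          _ = n * c := by simp [Finset.sum_const, nsmul_eq_mul]
      linarith
    have hRstep : ∀ n, R (n + 1) ≤ R n - ξ n := by
      intro n
      rw [hRn (n + 1)]
      refine max_le ?_ ?_
      · have hx : X n = ξ n + X (n + 1) := hXs n
        have := hXR n
        linarith
      · have hcast : ((n + 1 : ℕ) : ℝ) = (n : ℝ) + 1 := by push_cast; ring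
        have hexp : H 0 - ((n : ℝ) + 1) * c = (H 0 - (n : ℝ) * c) - c := by ring
        rw [hcast, hexp]
        have := hbR n
        have := hcξ n
        linarith
    have hRmono : ∀ n, R (n + 1) ≤ R n := by
      intro n
      have := hRstep n
      have := hξ0 n
      linarith
    have hRt : Tendsto R atTop (nhds 0) :=
      tendsto_of_tendsto_of_tendsto_of_le_of_le hXt hHt hXR hRH
    set ρ : ℕ → ℝ := fun n => R n - R (n + 1) with hρdef
    have hρn : ∀ n, ρ n = R n - R (n + 1) := fun n => rfl
    have hρsum : ∀ n, HasSum (fun k => ρ (n + k)) (R n) := fun n => aux_hasSum_tail hRmono hRt n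
    have hρξ : ∀ n, ξ n ≤ ρ n := by
      intro n
      have := hRstep n
      rw [hρn n]; linarith
    have hρ0 : ∀ n, 0 ≤ ρ n := fun n => le_trans (hξ0 n) (hρξ n)
    have hρm : ∀ n, ρ (n + 1) ≤ ρ n := by
      intro n
      have hc1 : ((n + 1 : ℕ) : ℝ) = (n : ℝ) + 1 := by push_cast; ring
      have hc2 : ((n + 2 : ℕ) : ℝ) = (n : ℝ) + 2 := by push_cast; ring
      have r1 : ((n : ℝ) + 1) * c = (n : ℝ) * c + c := by ring
      have r2 : ((n : ℝ) + 2) * c = (n : ℝ) * c + 2 * c := by ring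
      have hXcvx : 2 * X (n + 1) ≤ X n + X (n + 2) := by
        have h0 := hXs n
        have h1 := hXs (n + 1)
        have h2 := hξm n
        linarith
      have hXn2 : X (n + 2) ≤ R (n + 2) := hXR (n + 2)
      have hXnn : X n ≤ R n := hXR n
      have hbn : H 0 - (n : ℝ) * c ≤ R n := hbR n
      have hbn2 : H 0 - ((n + 2 : ℕ) : ℝ) * c ≤ R (n + 2) := hbR (n + 2)
      rw [hc2, r2] at hbn2
      have key : 2 * R (n + 1) ≤ R n + R (n + 2) := by
        rw [hRn (n + 1), hc1]
        rcases max_cases (X (n + 1)) (H 0 - ((n : ℝ) + 1) * c) with ⟨e, _⟩ | ⟨e, _⟩ <;>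
          rw [e] <;> linarith
      rw [hρn n, hρn (n + 1)]
      linarith
    have hρt : Tendsto ρ atTop (nhds 0) := by
      refine tendsto_of_tendsto_of_tendsto_of_le_of_le tendsto_const_nhds hRt hρ0 ?_
      intro n
      rw [hρn n]
      have hanti : Antitone R := antitone_nat_of_succ_le hRmono
      have : 0 ≤ R (n + 1) :=
        le_of_tendsto hRt (eventually_atTop.2 ⟨n + 1, fun k hk => hanti hk⟩)
      linarith
    refine ⟨ρ, ⟨hρ0, hρm, hρt⟩, ?_, hρξ, ⟨?_, ?_⟩⟩
    · have := (hρsum 0).summable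
      have e : (fun k => ρ (0 + k)) = ρ := by funext k; rw [Nat.zero_add]
      rwa [e] at this
    · intro n
      rw [(hρsum n).tsum_eq, ← hHn n]
      exact hRH n
    · rw [hHtot, ← hR0eq]
      have e : (fun k => ρ (0 + k)) = ρ := by funext k; rw [Nat.zero_add]
      have := (hρsum 0).tsum_eq
      rwa [e] at this
end
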